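/- arXiv:2212.03105 — 2 statements merged into one kernel-verified Lean document; each statement's English description precedes it below -/
import Mathlib

section
/- If T is an extensible set theory (based on intuitionistic logic), then all of Visser's rules V_n are admissible in T. -/
set_option autoImplicit false
set_option linter.unusedVariables false

/-! ## Propositional formulas, intuitionistic and classical propositional logic -/

/-- Formulas of propositional logic, with countably many propositional letters. -/
inductive PropForm : Type
  | var : ℕ → PropForm
  | bot : PropForm
  | top : PropForm
  | and : PropForm → PropForm → PropForm
  | or : PropForm → PropForm → PropForm
  | imp : PropForm → PropForm → PropForm

namespace PropForm
/-- Negation is defined, as usual, by `¬A := A → ⊥`. -/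
def neg (A : PropForm) : PropForm := A.imp .bot
end PropForm

/-- Substitution of propositional formulas for propositional letters;
it commutes with `⊥`, `⊤` and the connectives. -/
def substProp (s : ℕ → PropForm) : PropForm → PropForm
  | .var n => s n
  | .bot => .bot
  | .top => .top
  | .and A B => .and (substProp s A) (substProp s B)
  | .or A B => .or (substProp s A) (substProp s B)
  | .imp A B => .imp (substProp s A) (substProp s B)

/-- Natural deduction for (intuitionistic) propositional logic, with an additional
set `Ax` of axioms (so that classical logic is obtained by adding excluded middle). -/
inductive PropProv (Ax : Set PropForm) : Set PropForm → PropForm → Prop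
  | hyp {Γ : Set PropForm} {A} : A ∈ Γ → PropProv Ax Γ A
  | axm {Γ : Set PropForm} {A} : A ∈ Ax → PropProv Ax Γ A
  | topI {Γ : Set PropForm} : PropProv Ax Γ .top
  | botE {Γ : Set PropForm} {A : PropForm} : PropProv Ax Γ .bot → PropProv Ax Γ A
  | andI {Γ : Set PropForm} {A B : PropForm} : PropProv Ax Γ A → PropProv Ax Γ B → PropProv Ax Γ (A.and B)
  | andE1 {Γ : Set PropForm} {A B : PropForm} : PropProv Ax Γ (A.and B) → PropProv Ax Γ A
  | andE2 {Γ : Set PropForm} {A B : PropForm} : PropProv Ax Γ (A.and B) → PropProv Ax Γ B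
  | orI1 {Γ : Set PropForm} {A B : PropForm} : PropProv Ax Γ A → PropProv Ax Γ (A.or B)
  | orI2 {Γ : Set PropForm} {A B : PropForm} : PropProv Ax Γ B → PropProv Ax Γ (A.or B)
  | orE {Γ : Set PropForm} {A B C : PropForm} : PropProv Ax Γ (A.or B) → PropProv Ax (insert A Γ) C →
      PropProv Ax (insert B Γ) C → PropProv Ax Γ C
  | impI {Γ : Set PropForm} {A B : PropForm} : PropProv Ax (insert A Γ) B → PropProv Ax Γ (A.imp B)
  | impE {Γ : Set PropForm} {A B : PropForm} : PropProv Ax Γ (A.imp B) → PropProv Ax Γ A → PropProv Ax Γ B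

/-- The instances of the law of excluded middle. -/
def emAxioms : Set PropForm := {A | ∃ B : PropForm, A = B.or B.neg}

/-- Derivability in intuitionistic propositional logic `IPC`. -/
def IPCProv : Set PropForm → PropForm → Prop := PropProv ∅

/-- Derivability in classical propositional logic `CPC` (adding excluded middle). -/
def CPCProv : Set PropForm → PropForm → Prop := PropProv emAxioms

/-- The theorems of `IPC`. -/
def IPCThms : Set PropForm := {A | IPCProv ∅ A}

/-- The theorems of `CPC`. -/
def CPCThms : Set PropForm := {A | CPCProv ∅ A}

/-- The rule `A / B` is admissible in `IPC`. -/
def AdmIPC (A B : PropForm) : Prop :=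
  ∀ s : ℕ → PropForm, substProp s A ∈ IPCThms → substProp s B ∈ IPCThms

/-- Admissibility of the rule `A / B` in a propositional logic given as its set of theorems. -/
def AdmInLogic (L : Set PropForm) (A B : PropForm) : Prop :=
  ∀ s : ℕ → PropForm, substProp s A ∈ L → substProp s B ∈ L

/-- A propositional logic: a set of theorems closed under modus ponens and substitution. -/
structure PropLogic where
  thms : Set PropForm
  mp_closed : ∀ {A B : PropForm}, A.imp B ∈ thms → A ∈ thms → B ∈ thms
  subst_closed : ∀ (s : ℕ → PropForm) {A : PropForm}, A ∈ thms → substProp s A ∈ thms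

/-- An intermediate propositional logic: `IPC ⊆ J ⊆ CPC`. -/
def PropLogic.Intermediate (J : PropLogic) : Prop := IPCThms ⊆ J.thms ∧ J.thms ⊆ CPCThms

/-! ### Visser's rules -/

def bigAnd (l : List PropForm) : PropForm := l.foldr .and .top
def bigOr (l : List PropForm) : PropForm := l.foldr .or .bot

/-- The antecedent `⋀_{i=1}^n (A_i → B_i)` of Visser's rule `V_n`. -/
def visserAnte (n : ℕ) (A : Fin (n+2) → PropForm) (B : Fin n → PropForm) : PropForm :=
  bigAnd (List.ofFn fun i : Fin n => (A (i.castLE (by omega))).imp (B i))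

/-- The premise `(⋀_{i=1}^n (A_i → B_i) → (A_{n+1} ∨ A_{n+2})) ∨ C` of Visser's rule `V_n`. -/
def visserPrem (n : ℕ) (A : Fin (n+2) → PropForm) (B : Fin n → PropForm) (C : PropForm) :
    PropForm :=
  ((visserAnte n A B).imp ((A ⟨n, by omega⟩).or (A ⟨n+1, by omega⟩))).or C

/-- The conclusion `⋁_{j=1}^{n+2} (⋀_{i=1}^n (A_i → B_i) → A_j) ∨ C` of Visser's rule `V_n`. -/
def visserConc (n : ℕ) (A : Fin (n+2) → PropForm) (B : Fin n → PropForm) (C : PropForm) :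
    PropForm :=
  (bigOr (List.ofFn fun j : Fin (n+2) => (visserAnte n A B).imp (A j))).or C

/-! ## The language of set theory and Kripke models of set theory -/

/-- Formulas in the language of set theory: a binary membership relation `∈`,
equality `=`, and the intuitionistic connectives and quantifiers
(`¬A` is defined as `A → ⊥`); variables are represented by natural numbers. -/
inductive ZFForm : Type
  | mem : ℕ → ℕ → ZFForm
  | eq : ℕ → ℕ → ZFForm
  | bot : ZFForm
  | top : ZFForm
  | and : ZFForm → ZFForm → ZFForm
  | or : ZFForm → ZFForm → ZFForm
  | imp : ZFForm → ZFForm → ZFForm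
  | all : ℕ → ZFForm → ZFForm
  | ex : ℕ → ZFForm → ZFForm

namespace ZFForm

/-- Negation: `¬A := A → ⊥`. -/
def neg (A : ZFForm) : ZFForm := A.imp .bot

/-- Biconditional: `A ↔ B := (A → B) ∧ (B → A)`. -/
def biimp (A B : ZFForm) : ZFForm := (A.imp B).and (B.imp A)

/-- The free variables of a set-theoretic formula. -/
def FV : ZFForm → Finset ℕ
  | .mem i j => {i, j}
  | .eq i j => {i, j}
  | .bot => ∅
  | .top => ∅
  | .and A B => A.FV ∪ B.FV
  | .or A B => A.FV ∪ B.FV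
  | .imp A B => A.FV ∪ B.FV
  | .all x A => A.FV.erase x
  | .ex x A => A.FV.erase x

/-- A sentence is a formula without free variables. -/
def IsSentence (A : ZFForm) : Prop := A.FV = ∅

end ZFForm

/-- A Kripke model for set theory: a partial order `(K, ≤)` of worlds, a (nonempty) domain
`Dom v` for every world, transition functions `tr : Dom v → Dom w` for `v ≤ w` (functorial),
and interpretations `mem v` of the membership relation that are preserved by the transition
functions; equality is interpreted as actual equality of domain elements. -/
structure SetKripkeModel where
  World : Type
  le : World → World → Prop
  le_refl : ∀ w, le w w
  le_trans : ∀ {u v w}, le u v → le v w → le u w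
  le_antisymm : ∀ {u v}, le u v → le v u → u = v
  Dom : World → Type
  dne : ∀ w, Nonempty (Dom w)
  tr : ∀ {v w}, le v w → Dom v → Dom w
  tr_refl : ∀ (v) (h : le v v) (x : Dom v), tr h x = x
  tr_trans : ∀ {u v w} (h1 : le u v) (h2 : le v w) (h3 : le u w) (x : Dom u),
      tr h2 (tr h1 x) = tr h3 x
  mem : ∀ w, Dom w → Dom w → Prop
  mem_mono : ∀ {v w} (h : le v w) (x y : Dom v), mem v x y → mem w (tr h x) (tr h y)

/-- The forcing relation of a Kripke model of set theory. -/
def zforce (M : SetKripkeModel) : ZFForm → (v : M.World) → (ℕ → M.Dom v) → Prop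
  | .mem i j, v, ρ => M.mem v (ρ i) (ρ j)
  | .eq i j, v, ρ => ρ i = ρ j
  | .bot, _, _ => False
  | .top, _, _ => True
  | .and A B, v, ρ => zforce M A v ρ ∧ zforce M B v ρ
  | .or A B, v, ρ => zforce M A v ρ ∨ zforce M B v ρ
  | .imp A B, v, ρ => ∀ (w : M.World) (h : M.le v w),
      zforce M A w (fun n => M.tr h (ρ n)) → zforce M B w (fun n => M.tr h (ρ n))
  | .all x A, v, ρ => ∀ (w : M.World) (h : M.le v w) (d : M.Dom w),
      zforce M A w (Function.update (fun n => M.tr h (ρ n)) x d)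
  | .ex x A, v, ρ => ∃ d : M.Dom v, zforce M A v (Function.update ρ x d)

/-- `M ⊩ φ`: the formula is forced at every world (under every assignment). -/
def Forces (M : SetKripkeModel) (φ : ZFForm) : Prop :=
  ∀ (v : M.World) (ρ : ℕ → M.Dom v), zforce M φ v ρ

/-- The data needed to extend a Kripke model of set theory with a new root `r` below all
worlds: a domain for the root, a membership relation on it, and transition functions to the
old domains, compatibly with the old transition functions and preserving membership.
The resulting model `E.toModel` is based on the frame `K⁺` and restricts to `M` on `K`. -/
structure RootExtension (M : SetKripkeModel) where
  RDom : Type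
  rdne : Nonempty RDom
  rmem : RDom → RDom → Prop
  rtr : (v : M.World) → RDom → M.Dom v
  rtr_compat : ∀ {v w : M.World} (h : M.le v w) (x : RDom), M.tr h (rtr v x) = rtr w x
  rmem_mono : ∀ (v : M.World) (x y : RDom), rmem x y → M.mem v (rtr v x) (rtr v y)

namespace RootExtension

variable {M : SetKripkeModel}

/-- The order on `K⁺ = K ∪ {r}`; `none` is the new root `r`. -/
def optLe (M : SetKripkeModel) : Option M.World → Option M.World → Prop
  | none, _ => True
  | some _, none => False
  | some v, some w => M.le v w

/-- The domains of the extended model. -/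
def Dom' (E : RootExtension M) : Option M.World → Type
  | none => E.RDom
  | some v => M.Dom v

/-- The transition functions of the extended model. -/
def tr' (E : RootExtension M) :
    ∀ {a b : Option M.World}, optLe M a b → E.Dom' a → E.Dom' b
  | none, none, _, x => x
  | none, some v, _, x => E.rtr v x
  | some _, none, h, _ => h.elim
  | some _, some _, h, x => M.tr h x

/-- The membership relations of the extended model. -/
def mem' (E : RootExtension M) : (a : Option M.World) → E.Dom' a → E.Dom' a → Prop
  | none => E.rmem
  | some v => M.mem v

/-- The extended model `M⁺`, based on the frame `K⁺` obtained by adding a new root,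
which restricts to `M` on `K`. -/
def toModel (E : RootExtension M) : SetKripkeModel where
  World := Option M.World
  le := optLe M
  le_refl := fun a => by cases a with
    | none => trivial
    | some v => exact M.le_refl v
  le_trans := by
    intro a b c h1 h2
    cases a with
    | none => trivial
    | some v =>
      cases b with
      | none => exact h1.elim
      | some w =>
        cases c with
        | none => exact h2.elim
        | some u => exact M.le_trans h1 h2
  le_antisymm := by
    intro a b h1 h2
    cases a with
    | none =>
      cases b with
      | none => rfl
      | some w => exact h2.elim
    | some v =>
      cases b with
      | none => exact h1.elim
      | some w => exact congrArg some (M.le_antisymm h1 h2)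
  Dom := E.Dom'
  dne := fun a => by cases a with
    | none => exact E.rdne
    | some v => exact M.dne v
  tr := fun {a b} h x => E.tr' h x
  tr_refl := by
    intro a h x
    cases a with
    | none => rfl
    | some v => exact M.tr_refl v h x
  tr_trans := by
    intro a b c h1 h2 h3 x
    cases a with
    | none =>
      cases b with
      | none =>
        cases c with
        | none => rfl
        | some u => rfl
      | some w =>
        cases c with
        | none => exact h2.elim
        | some u => exact E.rtr_compat h2 x
    | some v =>
      cases b with
      | none => exact h1.elim
      | some w =>
        cases c with
        | none => exact h2.elim
        | some u => exact M.tr_trans h1 h2 h3 x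
  mem := E.mem'
  mem_mono := by
    intro a b h x y hxy
    cases a with
    | none =>
      cases b with
      | none => exact hxy
      | some w => exact E.rmem_mono w x y hxy
    | some v =>
      cases b with
      | none => exact h.elim
      | some w => exact M.mem_mono h x y hxy

end RootExtension

/-- `Δ` is `Γ`-extensible: every Kripke model of set theory forcing `Γ ∪ Δ` can be extended,
by adding a new root, to a model (based on the extended frame and restricting to the original
model) that forces `Δ`. -/
def GammaExtensible (Γ Δ : Set ZFForm) : Prop :=
  ∀ M : SetKripkeModel, (∀ φ ∈ Γ ∪ Δ, Forces M φ) →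
    ∃ E : RootExtension M, ∀ φ ∈ Δ, Forces E.toModel φ

/-- `Δ` is extensible: it is `∅`-extensible. -/
def Extensible (Δ : Set ZFForm) : Prop := GammaExtensible ∅ Δ

/-! ## Renaming of variables and bounded formulas -/

namespace ZFForm

/-- Rename the free occurrences of the variable `x` to `y`. -/
def renameFree (x y : ℕ) : ZFForm → ZFForm
  | .mem i j => .mem (if i = x then y else i) (if j = x then y else j)
  | .eq i j => .eq (if i = x then y else i) (if j = x then y else j)
  | .bot => .bot
  | .top => .top
  | .and A B => .and (A.renameFree x y) (B.renameFree x y)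
  | .or A B => .or (A.renameFree x y) (B.renameFree x y)
  | .imp A B => .imp (A.renameFree x y) (B.renameFree x y)
  | .all z A => if z = x then .all z A else .all z (A.renameFree x y)
  | .ex z A => if z = x then .ex z A else .ex z (A.renameFree x y)

/-- `y` is free for (substitutable for) `x`: no free occurrence of `x` lies in the scope of a
quantifier binding `y`. -/
def freeFor (y x : ℕ) : ZFForm → Prop
  | .mem _ _ => True
  | .eq _ _ => True
  | .bot => True
  | .top => True
  | .and A B => freeFor y x A ∧ freeFor y x B
  | .or A B => freeFor y x A ∧ freeFor y x B
  | .imp A B => freeFor y x A ∧ freeFor y x B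
  | .all z A => x ∉ (ZFForm.all z A).FV ∨ (y ≠ z ∧ freeFor y x A)
  | .ex z A => x ∉ (ZFForm.ex z A).FV ∨ (y ≠ z ∧ freeFor y x A)

end ZFForm

/-- The `Δ₀` (bounded) formulas: all quantifiers are bounded. -/
inductive IsDelta0 : ZFForm → Prop
  | mem (i j : ℕ) : IsDelta0 (.mem i j)
  | eq (i j : ℕ) : IsDelta0 (.eq i j)
  | bot : IsDelta0 .bot
  | top : IsDelta0 .top
  | and {A B : ZFForm} : IsDelta0 A → IsDelta0 B → IsDelta0 (A.and B)
  | or {A B : ZFForm} : IsDelta0 A → IsDelta0 B → IsDelta0 (A.or B)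
  | imp {A B : ZFForm} : IsDelta0 A → IsDelta0 B → IsDelta0 (A.imp B)
  | ball {x y : ℕ} {A : ZFForm} : x ≠ y → IsDelta0 A →
      IsDelta0 (.all x ((ZFForm.mem x y).imp A))
  | bex {x y : ℕ} {A : ZFForm} : x ≠ y → IsDelta0 A →
      IsDelta0 (.ex x ((ZFForm.mem x y).and A))

/-! ## Provability for set theories, over intuitionistic first-order logic with equality -/

/-- Hilbert-style derivability in intuitionistic first-order logic (in the language of set
theory) from the set of axioms `Ax`, with modus ponens and generalisation. -/
inductive ZFProv (Ax : Set ZFForm) : ZFForm → Prop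
  | axm {A : ZFForm} : A ∈ Ax → ZFProv Ax A
  | k {A B : ZFForm} : ZFProv Ax (A.imp (B.imp A))
  | s {A B C : ZFForm} : ZFProv Ax ((A.imp (B.imp C)).imp ((A.imp B).imp (A.imp C)))
  | andI {A B : ZFForm} : ZFProv Ax (A.imp (B.imp (A.and B)))
  | andE1 {A B : ZFForm} : ZFProv Ax ((A.and B).imp A)
  | andE2 {A B : ZFForm} : ZFProv Ax ((A.and B).imp B)
  | orI1 {A B : ZFForm} : ZFProv Ax (A.imp (A.or B))
  | orI2 {A B : ZFForm} : ZFProv Ax (B.imp (A.or B))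
  | orE {A B C : ZFForm} : ZFProv Ax ((A.imp C).imp ((B.imp C).imp ((A.or B).imp C)))
  | botE {A : ZFForm} : ZFProv Ax (ZFForm.bot.imp A)
  | topI : ZFProv Ax .top
  | allE {x y : ℕ} {A : ZFForm} : A.freeFor y x →
      ZFProv Ax ((ZFForm.all x A).imp (A.renameFree x y))
  | exI {x y : ℕ} {A : ZFForm} : A.freeFor y x →
      ZFProv Ax ((A.renameFree x y).imp (.ex x A))
  | allShift {x : ℕ} {A B : ZFForm} : x ∉ A.FV →
      ZFProv Ax ((ZFForm.all x (A.imp B)).imp (A.imp (.all x B)))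
  | exShift {x : ℕ} {A B : ZFForm} : x ∉ B.FV →
      ZFProv Ax ((ZFForm.all x (A.imp B)).imp ((ZFForm.ex x A).imp B))
  | mp {A B : ZFForm} : ZFProv Ax (A.imp B) → ZFProv Ax A → ZFProv Ax B
  | gen {x : ℕ} {A : ZFForm} : ZFProv Ax A → ZFProv Ax (.all x A)

/-- The axioms of equality in the language of set theory. -/
def zfEqAxioms : Set ZFForm :=
  {A | (∃ i, A = ZFForm.eq i i) ∨
       (∃ i j, A = (ZFForm.eq i j).imp (.eq j i)) ∨
       (∃ i j k, A = (ZFForm.eq i j).imp ((ZFForm.eq j k).imp (.eq i k))) ∨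
       (∃ i j k, A = (ZFForm.eq i j).imp ((ZFForm.mem i k).imp (.mem j k))) ∨
       (∃ i j k, A = (ZFForm.eq i j).imp ((ZFForm.mem k i).imp (.mem k j)))}

/-- `T ⊢ φ`: provability in the set theory `T` over intuitionistic first-order logic
with equality. -/
def thyProv (T : Set ZFForm) (φ : ZFForm) : Prop := ZFProv (T ∪ zfEqAxioms) φ

/-! ## Propositional substitutions into the language of set theory -/

/-- Substitution of set-theoretic formulas for propositional letters. -/
def substZ (s : ℕ → ZFForm) : PropForm → ZFForm
  | .var n => s n
  | .bot => .bot
  | .top => .top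
  | .and A B => (substZ s A).and (substZ s B)
  | .or A B => (substZ s A).or (substZ s B)
  | .imp A B => (substZ s A).imp (substZ s B)

/-- The propositional logic `L(T)` of a set theory with provability predicate `Pr`:
all propositional formulas `A` with `Pr (σ(A))` for every substitution `σ` of set-theoretic
sentences for the propositional letters. -/
def LofPr (Pr : ZFForm → Prop) : Set PropForm :=
  {A | ∀ s : ℕ → ZFForm, (∀ n, (s n).IsSentence) → Pr (substZ s A)}

/-- The propositional rule `A / B` is admissible in a set theory: for every substitution of
set-theoretic sentences for the propositional letters, provability of `σ(A)` implies
provability of `σ(B)`. -/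
def AdmZ (Pr : ZFForm → Prop) (A B : PropForm) : Prop :=
  ∀ s : ℕ → ZFForm, (∀ n, (s n).IsSentence) → Pr (substZ s A) → Pr (substZ s B)

/-! ### Section 1: Hilbert-style propositional meta-lemmas -/

namespace ZFProv
variable {Ax : Set ZFForm} {A B C X Y Z : ZFForm}

theorem idThm : ZFProv Ax (A.imp A) :=
  ((s (A := A) (B := A.imp A) (C := A)).mp k).mp k

theorem comp (h1 : ZFProv Ax (X.imp Y)) (h2 : ZFProv Ax (Y.imp Z)) :
    ZFProv Ax (X.imp Z) :=
  (s.mp (k.mp h2)).mp h1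

theorem flipL (h : ZFProv Ax (X.imp (Y.imp Z))) : ZFProv Ax (Y.imp (X.imp Z)) :=
  comp k (s.mp h)

theorem bThm : ZFProv Ax ((Y.imp Z).imp ((X.imp Y).imp (X.imp Z))) := comp k s

theorem cThm : ZFProv Ax ((X.imp Y).imp ((Y.imp Z).imp (X.imp Z))) := flipL bThm

theorem flipThm : ZFProv Ax ((X.imp (Y.imp Z)).imp (Y.imp (X.imp Z))) :=
  flipL (comp k (flipL s))

theorem impK (h : ZFProv Ax X) : ZFProv Ax (Y.imp X) := k.mp h

end ZFProv

/-! ### Section 2: finite-context derivability -/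

/-- Iterated implication from a finite context. -/
def impCtx (L : List ZFForm) (A : ZFForm) : ZFForm := L.foldr .imp A

/-- Derivability of `A` from the finite context `L` over the axioms `Ax`. -/
def DerC (Ax : Set ZFForm) (L : List ZFForm) (A : ZFForm) : Prop :=
  ZFProv Ax (impCtx L A)

namespace DerC
variable {Ax : Set ZFForm} {L L' : List ZFForm} {A B C X Y : ZFForm}

theorem of_prov (h : ZFProv Ax A) : DerC Ax L A := by
  induction L with
  | nil => exact h
  | cons F L ih => exact ZFProv.impK ih

theorem weakHead (h : DerC Ax L A) : DerC Ax (B :: L) A := ZFProv.impK h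

/-- Lifting a provable implication under a context. -/
theorem liftCtx (h : ZFProv Ax (X.imp Y)) :
    ZFProv Ax ((impCtx L X).imp (impCtx L Y)) := by
  induction L with
  | nil => exact h
  | cons F L ih => exact ZFProv.bThm.mp ih

theorem sCtx : ZFProv Ax ((impCtx L (A.imp B)).imp ((impCtx L A).imp (impCtx L B))) := by
  induction L with
  | nil => exact ZFProv.idThm
  | cons F L ih =>
    exact ZFProv.comp (ZFProv.bThm.mp ih) ZFProv.s

theorem mp (h1 : DerC Ax L (A.imp B)) (h2 : DerC Ax L A) : DerC Ax L B :=
  (sCtx.mp h1).mp h2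

theorem selfCtx : ZFProv Ax (A.imp (impCtx L A)) := by
  induction L with
  | nil => exact ZFProv.idThm
  | cons F L ih => exact ZFProv.comp ih ZFProv.k

theorem hyp (h : A ∈ L) : DerC Ax L A := by
  induction L with
  | nil => cases h
  | cons F L ih =>
    rcases List.mem_cons.mp h with h | h
    · subst h; exact selfCtx
    · exact ZFProv.impK (ih h)

theorem impI_thm : ZFProv Ax ((A.imp (impCtx L B)).imp (impCtx L (A.imp B))) := by
  induction L with
  | nil => exact ZFProv.idThm
  | cons C L ih =>
    exact ZFProv.comp ZFProv.flipThm (ZFProv.bThm.mp ih)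

theorem impI (h : DerC Ax (A :: L) B) : DerC Ax L (A.imp B) := impI_thm.mp h

theorem impE (h : DerC Ax L (A.imp B)) : DerC Ax (A :: L) B :=
  mp (weakHead h) (hyp (List.mem_cons_self))

theorem mp_ctx (h : DerC Ax L' (impCtx L A)) (hh : ∀ x ∈ L, DerC Ax L' x) :
    DerC Ax L' A := by
  induction L with
  | nil => exact h
  | cons F L ih =>
    exact ih (mp h (hh F (List.mem_cons_self))) (fun x hx => hh x (List.mem_cons_of_mem _ hx))

theorem mono (hs : ∀ x ∈ L, x ∈ L') (h : DerC Ax L A) : DerC Ax L' A :=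
  mp_ctx (of_prov h) (fun x hx => hyp (hs x hx))

theorem andI (h1 : DerC Ax L A) (h2 : DerC Ax L B) : DerC Ax L (A.and B) :=
  mp (mp (of_prov ZFProv.andI) h1) h2

theorem andE1 (h : DerC Ax L (A.and B)) : DerC Ax L A := mp (of_prov ZFProv.andE1) h
theorem andE2 (h : DerC Ax L (A.and B)) : DerC Ax L B := mp (of_prov ZFProv.andE2) h
theorem orI1 (h : DerC Ax L A) : DerC Ax L (A.or B) := mp (of_prov ZFProv.orI1) h
theorem orI2 (h : DerC Ax L B) : DerC Ax L (A.or B) := mp (of_prov ZFProv.orI2) h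

theorem orE (h : DerC Ax L (A.or B)) (h1 : DerC Ax (A :: L) C) (h2 : DerC Ax (B :: L) C) :
    DerC Ax L C :=
  mp (mp (mp (of_prov ZFProv.orE) (impI h1)) (impI h2)) h

theorem botE (h : DerC Ax L ZFForm.bot) : DerC Ax L A := mp (of_prov ZFProv.botE) h

end DerC
/-! ### Section 3: syntactic toolkit -/

namespace ZFForm

/-- All bound variables (binders) of a formula are even. -/
def Good : ZFForm → Prop
  | .mem _ _ => True
  | .eq _ _ => True
  | .bot => True
  | .top => True
  | .and A B => Good A ∧ Good B
  | .or A B => Good A ∧ Good B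
  | .imp A B => Good A ∧ Good B
  | .all x A => Even x ∧ Good A
  | .ex x A => Even x ∧ Good A

/-- A strict bound for all variables (free or bound) occurring in a formula. -/
def maxv : ZFForm → ℕ
  | .mem i j => max i j + 1
  | .eq i j => max i j + 1
  | .bot => 0
  | .top => 0
  | .and A B => max (maxv A) (maxv B)
  | .or A B => max (maxv A) (maxv B)
  | .imp A B => max (maxv A) (maxv B)
  | .all x A => max (x+1) (maxv A)
  | .ex x A => max (x+1) (maxv A)

/-- Size of a formula (invariant under renaming). -/
def fsize : ZFForm → ℕ
  | .mem _ _ => 1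
  | .eq _ _ => 1
  | .bot => 1
  | .top => 1
  | .and A B => fsize A + fsize B + 1
  | .or A B => fsize A + fsize B + 1
  | .imp A B => fsize A + fsize B + 1
  | .all _ A => fsize A + 1
  | .ex _ A => fsize A + 1

variable {A B : ZFForm} {x y z c v : ℕ}

theorem lt_maxv (h : v ∈ FV A) : v < maxv A := by
  induction A with
  | mem i j => simp [FV] at h; rcases h with h | h <;> simp [maxv] <;> omega
  | eq i j => simp [FV] at h; rcases h with h | h <;> simp [maxv] <;> omega
  | bot => simp [FV] at h
  | top => simp [FV] at h
  | and A B ihA ihB =>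
      simp [FV] at h; rcases h with h | h
      · exact lt_of_lt_of_le (ihA h) (le_max_left _ _)
      · exact lt_of_lt_of_le (ihB h) (le_max_right _ _)
  | or A B ihA ihB =>
      simp [FV] at h; rcases h with h | h
      · exact lt_of_lt_of_le (ihA h) (le_max_left _ _)
      · exact lt_of_lt_of_le (ihB h) (le_max_right _ _)
  | imp A B ihA ihB =>
      simp [FV] at h; rcases h with h | h
      · exact lt_of_lt_of_le (ihA h) (le_max_left _ _)
      · exact lt_of_lt_of_le (ihB h) (le_max_right _ _)
  | all w A ih =>
      simp [FV] at h
      exact lt_of_lt_of_le (ih h.2) (le_max_right _ _)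
  | ex w A ih =>
      simp [FV] at h
      exact lt_of_lt_of_le (ih h.2) (le_max_right _ _)

theorem freeFor_of_maxv_le (h : maxv A ≤ y) : freeFor y x A := by
  induction A with
  | mem i j => trivial
  | eq i j => trivial
  | bot => trivial
  | top => trivial
  | and A B ihA ihB => exact ⟨ihA (le_trans (le_max_left _ _) h), ihB (le_trans (le_max_right _ _) h)⟩
  | or A B ihA ihB => exact ⟨ihA (le_trans (le_max_left _ _) h), ihB (le_trans (le_max_right _ _) h)⟩
  | imp A B ihA ihB => exact ⟨ihA (le_trans (le_max_left _ _) h), ihB (le_trans (le_max_right _ _) h)⟩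
  | all w A ih =>
      refine Or.inr ⟨?_, ih (le_trans (le_max_right _ _) h)⟩
      simp [maxv] at h; omega
  | ex w A ih =>
      refine Or.inr ⟨?_, ih (le_trans (le_max_right _ _) h)⟩
      simp [maxv] at h; omega

theorem freeFor_of_good_odd (hg : Good A) (hc : ¬ Even c) : freeFor c x A := by
  induction A with
  | mem i j => trivial
  | eq i j => trivial
  | bot => trivial
  | top => trivial
  | and A B ihA ihB => exact ⟨ihA hg.1, ihB hg.2⟩
  | or A B ihA ihB => exact ⟨ihA hg.1, ihB hg.2⟩
  | imp A B ihA ihB => exact ⟨ihA hg.1, ihB hg.2⟩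
  | all w A ih =>
      refine Or.inr ⟨fun hh => ?_, ih hg.2⟩
      exact hc (hh ▸ hg.1)
  | ex w A ih =>
      refine Or.inr ⟨fun hh => ?_, ih hg.2⟩
      exact hc (hh ▸ hg.1)

theorem freeFor_self : freeFor x x A := by
  induction A with
  | mem i j => trivial
  | eq i j => trivial
  | bot => trivial
  | top => trivial
  | and A B ihA ihB => exact ⟨ihA, ihB⟩
  | or A B ihA ihB => exact ⟨ihA, ihB⟩
  | imp A B ihA ihB => exact ⟨ihA, ihB⟩
  | all w A ih =>
      by_cases hx : x ∈ FV (ZFForm.all w A)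
      · refine Or.inr ⟨?_, ih⟩
        simp [FV] at hx; exact hx.1
      · exact Or.inl hx
  | ex w A ih =>
      by_cases hx : x ∈ FV (ZFForm.ex w A)
      · refine Or.inr ⟨?_, ih⟩
        simp [FV] at hx; exact hx.1
      · exact Or.inl hx

theorem rf_of_not_mem (h : x ∉ FV A) : renameFree x y A = A := by
  induction A with
  | mem i j => simp [FV] at h; simp [renameFree]; omega
  | eq i j => simp [FV] at h; simp [renameFree]; omega
  | bot => rfl
  | top => rfl
  | and A B ihA ihB => simp [FV] at h; simp [renameFree, ihA h.1, ihB h.2]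
  | or A B ihA ihB => simp [FV] at h; simp [renameFree, ihA h.1, ihB h.2]
  | imp A B ihA ihB => simp [FV] at h; simp [renameFree, ihA h.1, ihB h.2]
  | all w A ih =>
      by_cases hw : w = x
      · simp [renameFree, hw]
      · simp [FV] at h
        have : x ∉ FV A := fun hx => (h (Ne.symm hw) hx)
        simp [renameFree, hw, ih this]
  | ex w A ih =>
      by_cases hw : w = x
      · simp [renameFree, hw]
      · simp [FV] at h
        have : x ∉ FV A := fun hx => (h (Ne.symm hw) hx)
        simp [renameFree, hw, ih this]

theorem rf_self : renameFree x x A = A := by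
  induction A with
  | mem i j => simp [renameFree]; omega
  | eq i j => simp [renameFree]; omega
  | bot => rfl
  | top => rfl
  | and A B ihA ihB => simp [renameFree, ihA, ihB]
  | or A B ihA ihB => simp [renameFree, ihA, ihB]
  | imp A B ihA ihB => simp [renameFree, ihA, ihB]
  | all w A ih => by_cases hw : w = x <;> simp [renameFree, hw, ih]
  | ex w A ih => by_cases hw : w = x <;> simp [renameFree, hw, ih]

theorem not_mem_FV_rf (hxy : x ≠ y) : x ∉ FV (renameFree x y A) := by
  induction A with
  | mem i j =>
      simp [renameFree, FV]
      constructor <;> split <;> simp_all <;> omega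
  | eq i j =>
      simp [renameFree, FV]
      constructor <;> split <;> simp_all <;> omega
  | bot => simp [renameFree, FV]
  | top => simp [renameFree, FV]
  | and A B ihA ihB => simp [renameFree, FV]; exact ⟨ihA, ihB⟩
  | or A B ihA ihB => simp [renameFree, FV]; exact ⟨ihA, ihB⟩
  | imp A B ihA ihB => simp [renameFree, FV]; exact ⟨ihA, ihB⟩
  | all w A ih =>
      by_cases hw : w = x
      · subst hw; simp [renameFree, FV]
      · simp only [renameFree, if_neg hw, FV]
        exact fun hc => ih (Finset.mem_of_mem_erase hc)
  | ex w A ih =>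
      by_cases hw : w = x
      · subst hw; simp [renameFree, FV]
      · simp only [renameFree, if_neg hw, FV]
        exact fun hc => ih (Finset.mem_of_mem_erase hc)

theorem mem_FV_rf (h : z ∈ FV (renameFree x y A)) :
    z = y ∨ (z ∈ FV A ∧ z ≠ x) := by
  induction A with
  | mem i j =>
      simp [renameFree, FV] at h
      rcases h with h | h <;> revert h <;> split <;> intro h <;> simp_all [FV] <;> omega
  | eq i j =>
      simp [renameFree, FV] at h
      rcases h with h | h <;> revert h <;> split <;> intro h <;> simp_all [FV] <;> omega
  | bot => simp [renameFree, FV] at h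
  | top => simp [renameFree, FV] at h
  | and A B ihA ihB =>
      simp [renameFree, FV] at h
      rcases h with h | h
      · rcases ihA h with h | h
        · exact Or.inl h
        · exact Or.inr ⟨by simp [FV, h.1], h.2⟩
      · rcases ihB h with h | h
        · exact Or.inl h
        · exact Or.inr ⟨by simp [FV, h.1], h.2⟩
  | or A B ihA ihB =>
      simp [renameFree, FV] at h
      rcases h with h | h
      · rcases ihA h with h | h
        · exact Or.inl h
        · exact Or.inr ⟨by simp [FV, h.1], h.2⟩
      · rcases ihB h with h | h
        · exact Or.inl h
        · exact Or.inr ⟨by simp [FV, h.1], h.2⟩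
  | imp A B ihA ihB =>
      simp [renameFree, FV] at h
      rcases h with h | h
      · rcases ihA h with h | h
        · exact Or.inl h
        · exact Or.inr ⟨by simp [FV, h.1], h.2⟩
      · rcases ihB h with h | h
        · exact Or.inl h
        · exact Or.inr ⟨by simp [FV, h.1], h.2⟩
  | all w A ih =>
      by_cases hw : w = x
      · subst hw
        simp [renameFree, FV] at h ⊢
        exact Or.inr ⟨⟨h.1, h.2⟩, h.1⟩
      · simp [renameFree, hw, FV] at h
        rcases ih h.2 with hh | hh
        · exact Or.inl hh
        · exact Or.inr ⟨by simp [FV]; exact ⟨h.1, hh.1⟩, hh.2⟩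
  | ex w A ih =>
      by_cases hw : w = x
      · subst hw
        simp [renameFree, FV] at h ⊢
        exact Or.inr ⟨⟨h.1, h.2⟩, h.1⟩
      · simp [renameFree, hw, FV] at h
        rcases ih h.2 with hh | hh
        · exact Or.inl hh
        · exact Or.inr ⟨by simp [FV]; exact ⟨h.1, hh.1⟩, hh.2⟩

theorem Good_rf (hg : Good A) : Good (renameFree x y A) := by
  induction A with
  | mem i j => trivial
  | eq i j => trivial
  | bot => trivial
  | top => trivial
  | and A B ihA ihB => exact ⟨ihA hg.1, ihB hg.2⟩
  | or A B ihA ihB => exact ⟨ihA hg.1, ihB hg.2⟩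
  | imp A B ihA ihB => exact ⟨ihA hg.1, ihB hg.2⟩
  | all w A ih =>
      by_cases hw : w = x <;> simp [renameFree, hw, Good] at hg ⊢
      · exact hg
      · exact ⟨hg.1, ih hg.2⟩
  | ex w A ih =>
      by_cases hw : w = x <;> simp [renameFree, hw, Good] at hg ⊢
      · exact hg
      · exact ⟨hg.1, ih hg.2⟩

theorem fsize_rf : fsize (renameFree x y A) = fsize A := by
  induction A with
  | mem i j => rfl
  | eq i j => rfl
  | bot => rfl
  | top => rfl
  | and A B ihA ihB => simp [renameFree, fsize, ihA, ihB]
  | or A B ihA ihB => simp [renameFree, fsize, ihA, ihB]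
  | imp A B ihA ihB => simp [renameFree, fsize, ihA, ihB]
  | all w A ih => by_cases hw : w = x <;> simp [renameFree, hw, fsize, ih]
  | ex w A ih => by_cases hw : w = x <;> simp [renameFree, hw, fsize, ih]

theorem rf_cancel (hff : freeFor y x A) (hy : y ∉ FV A) :
    renameFree y x (renameFree x y A) = A := by
  by_cases hxy : x = y
  · subst hxy; simp [rf_self]
  induction A with
  | mem i j =>
      simp [FV] at hy
      simp only [renameFree]
      split_ifs <;> simp_all
  | eq i j =>
      simp [FV] at hy
      simp only [renameFree]
      split_ifs <;> simp_all
  | bot => rfl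
  | top => rfl
  | and A B ihA ihB =>
      simp [FV] at hy
      simp [renameFree, ihA hff.1 hy.1, ihB hff.2 hy.2]
  | or A B ihA ihB =>
      simp [FV] at hy
      simp [renameFree, ihA hff.1 hy.1, ihB hff.2 hy.2]
  | imp A B ihA ihB =>
      simp [FV] at hy
      simp [renameFree, ihA hff.1 hy.1, ihB hff.2 hy.2]
  | all w A ih =>
      by_cases hw : w = x
      · have h1 : renameFree x y (ZFForm.all w A) = ZFForm.all w A := by
          simp [renameFree, hw]
        have hwy : ¬ (w = y) := by omega
        have hyA : y ∉ FV A := by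
          intro hmem; apply hy; simp [FV]; exact ⟨by omega, hmem⟩
        rw [h1]
        simp [renameFree, hwy, rf_of_not_mem hyA]
      · rcases hff with hff | hff
        · have hxA : x ∉ FV A := by
            intro hmem; apply hff; simp [FV]; exact ⟨by omega, hmem⟩
          have h1 : renameFree x y (ZFForm.all w A) = ZFForm.all w A := by
            simp [renameFree, hw, rf_of_not_mem hxA]
          rw [h1]
          by_cases hwy : w = y
          · simp [renameFree, hwy]
          · have hyA : y ∉ FV A := by
              intro hmem; apply hy; simp [FV]; exact ⟨by omega, hmem⟩
            simp [renameFree, hwy, rf_of_not_mem hyA]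
        · obtain ⟨hyw, hffA⟩ := hff
          have hyA : y ∉ FV A := by
            intro hmem; apply hy; simp [FV]; exact ⟨by omega, hmem⟩
          have hwy : ¬ (w = y) := by omega
          simp [renameFree, hw, hwy, ih hffA hyA]
  | ex w A ih =>
      by_cases hw : w = x
      · have h1 : renameFree x y (ZFForm.ex w A) = ZFForm.ex w A := by
          simp [renameFree, hw]
        have hwy : ¬ (w = y) := by omega
        have hyA : y ∉ FV A := by
          intro hmem; apply hy; simp [FV]; exact ⟨by omega, hmem⟩
        rw [h1]
        simp [renameFree, hwy, rf_of_not_mem hyA]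
      · rcases hff with hff | hff
        · have hxA : x ∉ FV A := by
            intro hmem; apply hff; simp [FV]; exact ⟨by omega, hmem⟩
          have h1 : renameFree x y (ZFForm.ex w A) = ZFForm.ex w A := by
            simp [renameFree, hw, rf_of_not_mem hxA]
          rw [h1]
          by_cases hwy : w = y
          · simp [renameFree, hwy]
          · have hyA : y ∉ FV A := by
              intro hmem; apply hy; simp [FV]; exact ⟨by omega, hmem⟩
            simp [renameFree, hwy, rf_of_not_mem hyA]
        · obtain ⟨hyw, hffA⟩ := hff
          have hyA : y ∉ FV A := by
            intro hmem; apply hy; simp [FV]; exact ⟨by omega, hmem⟩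
          have hwy : ¬ (w = y) := by omega
          simp [renameFree, hw, hwy, ih hffA hyA]

theorem freeFor_rf (hff : freeFor y x A) (hy : y ∉ FV A) :
    freeFor x y (renameFree x y A) := by
  by_cases hxy : x = y
  · subst hxy; rw [rf_self]; exact freeFor_self
  induction A with
  | mem i j => trivial
  | eq i j => trivial
  | bot => trivial
  | top => trivial
  | and A B ihA ihB =>
      simp [FV] at hy
      exact ⟨ihA hff.1 hy.1, ihB hff.2 hy.2⟩
  | or A B ihA ihB =>
      simp [FV] at hy
      exact ⟨ihA hff.1 hy.1, ihB hff.2 hy.2⟩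
  | imp A B ihA ihB =>
      simp [FV] at hy
      exact ⟨ihA hff.1 hy.1, ihB hff.2 hy.2⟩
  | all w A ih =>
      by_cases hw : w = x
      · have h1 : renameFree x y (ZFForm.all w A) = ZFForm.all w A := by
          simp [renameFree, hw]
        rw [h1]
        exact Or.inl hy
      · rcases hff with hff | hff
        · have hxA : x ∉ FV A := by
            intro hmem; apply hff; simp [FV]; exact ⟨by omega, hmem⟩
          have h1 : renameFree x y (ZFForm.all w A) = ZFForm.all w A := by
            simp [renameFree, hw, rf_of_not_mem hxA]
          rw [h1]
          exact Or.inl hy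
        · obtain ⟨hyw, hffA⟩ := hff
          have hyA : y ∉ FV A := by
            intro hmem; apply hy; simp [FV]; exact ⟨by omega, hmem⟩
          have h1 : renameFree x y (ZFForm.all w A) = ZFForm.all w (renameFree x y A) := by
            simp [renameFree, hw]
          rw [h1]
          exact Or.inr ⟨by omega, ih hffA hyA⟩
  | ex w A ih =>
      by_cases hw : w = x
      · have h1 : renameFree x y (ZFForm.ex w A) = ZFForm.ex w A := by
          simp [renameFree, hw]
        rw [h1]
        exact Or.inl hy
      · rcases hff with hff | hff
        · have hxA : x ∉ FV A := by
            intro hmem; apply hff; simp [FV]; exact ⟨by omega, hmem⟩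
          have h1 : renameFree x y (ZFForm.ex w A) = ZFForm.ex w A := by
            simp [renameFree, hw, rf_of_not_mem hxA]
          rw [h1]
          exact Or.inl hy
        · obtain ⟨hyw, hffA⟩ := hff
          have hyA : y ∉ FV A := by
            intro hmem; apply hy; simp [FV]; exact ⟨by omega, hmem⟩
          have h1 : renameFree x y (ZFForm.ex w A) = ZFForm.ex w (renameFree x y A) := by
            simp [renameFree, hw]
          rw [h1]
          exact Or.inr ⟨by omega, ih hffA hyA⟩

end ZFForm
/-! ### Section 4: semantic lemmas -/

section Semantics
variable {M : SetKripkeModel}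

theorem tr_refl_comp {v : M.World} (ρ : ℕ → M.Dom v) :
    (fun n => M.tr (M.le_refl v) (ρ n)) = ρ := funext fun n => M.tr_refl v _ (ρ n)

theorem tr_trans_comp {u v w : M.World} (h1 : M.le u v) (h2 : M.le v w) (ρ : ℕ → M.Dom u) :
    (fun n => M.tr h2 ((fun m => M.tr h1 (ρ m)) n)) = fun n => M.tr (M.le_trans h1 h2) (ρ n) :=
  funext fun n => M.tr_trans h1 h2 _ (ρ n)

theorem tr_update {v w : M.World} (h : M.le v w) (ρ : ℕ → M.Dom v) (x : ℕ) (d : M.Dom v) :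
    (fun n => M.tr h (Function.update ρ x d n)) =
      Function.update (fun n => M.tr h (ρ n)) x (M.tr h d) := by
  funext n
  by_cases hn : n = x <;> simp [Function.update_apply, hn]

theorem zforce_coincide (A : ZFForm) : ∀ (v : M.World) (ρ ρ' : ℕ → M.Dom v),
    (∀ k ∈ A.FV, ρ k = ρ' k) → (zforce M A v ρ ↔ zforce M A v ρ') := by
  induction A with
  | mem i j =>
      intro v ρ ρ' h
      simp [zforce, h i (by simp [ZFForm.FV]), h j (by simp [ZFForm.FV])]
  | eq i j =>
      intro v ρ ρ' h
      simp [zforce, h i (by simp [ZFForm.FV]), h j (by simp [ZFForm.FV])]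
  | bot => intro _ _ _ _; exact Iff.rfl
  | top => intro _ _ _ _; exact Iff.rfl
  | and A B ihA ihB =>
      intro v ρ ρ' h
      simp only [zforce]
      rw [ihA v ρ ρ' (fun k hk => h k (by simp [ZFForm.FV]; exact Or.inl hk)),
          ihB v ρ ρ' (fun k hk => h k (by simp [ZFForm.FV]; exact Or.inr hk))]
  | or A B ihA ihB =>
      intro v ρ ρ' h
      simp only [zforce]
      rw [ihA v ρ ρ' (fun k hk => h k (by simp [ZFForm.FV]; exact Or.inl hk)),
          ihB v ρ ρ' (fun k hk => h k (by simp [ZFForm.FV]; exact Or.inr hk))]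
  | imp A B ihA ihB =>
      intro v ρ ρ' h
      simp only [zforce]
      refine forall_congr' fun w => forall_congr' fun hw => ?_
      rw [ihA w _ _ (fun k hk => congrArg (M.tr hw) (h k (by simp [ZFForm.FV]; exact Or.inl hk))),
          ihB w _ _ (fun k hk => congrArg (M.tr hw) (h k (by simp [ZFForm.FV]; exact Or.inr hk)))]
  | all z A ih =>
      intro v ρ ρ' h
      simp only [zforce]
      refine forall_congr' fun w => forall_congr' fun hw => forall_congr' fun d => ?_
      apply ih
      intro k hk
      by_cases hkz : k = z
      · subst hkz; simp
      · simp only [Function.update_apply, if_neg hkz]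
        exact congrArg (M.tr hw) (h k (by simp [ZFForm.FV]; exact ⟨hkz, hk⟩))
  | ex z A ih =>
      intro v ρ ρ' h
      simp only [zforce]
      refine exists_congr fun d => ?_
      apply ih
      intro k hk
      by_cases hkz : k = z
      · subst hkz; simp
      · simp only [Function.update_apply, if_neg hkz]
        exact h k (by simp [ZFForm.FV]; exact ⟨hkz, hk⟩)

theorem zforce_mono (A : ZFForm) : ∀ {v w : M.World} (h : M.le v w) (ρ : ℕ → M.Dom v),
    zforce M A v ρ → zforce M A w (fun n => M.tr h (ρ n)) := by
  induction A with
  | mem i j => intro v w h ρ H; exact M.mem_mono h _ _ H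
  | eq i j =>
      intro v w h ρ H
      simp only [zforce] at H ⊢
      rw [H]
  | bot => intro _ _ _ _ H; exact H
  | top => intro _ _ _ _ _; trivial
  | and A B ihA ihB => intro v w h ρ H; exact ⟨ihA h ρ H.1, ihB h ρ H.2⟩
  | or A B ihA ihB =>
      intro v w h ρ H
      rcases H with H | H
      · exact Or.inl (ihA h ρ H)
      · exact Or.inr (ihB h ρ H)
  | imp A B ihA ihB =>
      intro v w h ρ H u hu ha
      rw [tr_trans_comp h hu ρ] at ha ⊢
      exact H u (M.le_trans h hu) ha
  | all z A ih =>
      intro v w h ρ H u hu d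
      rw [tr_trans_comp h hu ρ]
      exact H u (M.le_trans h hu) d
  | ex z A ih =>
      intro v w h ρ H
      rcases H with ⟨d, hd⟩
      refine ⟨M.tr h d, ?_⟩
      have := ih h _ hd
      rwa [tr_update h ρ z d] at this

theorem zforce_imp_elim {A B : ZFForm} {v : M.World} {ρ : ℕ → M.Dom v}
    (h : zforce M (A.imp B) v ρ) (ha : zforce M A v ρ) : zforce M B v ρ := by
  have := h v (M.le_refl v)
  rw [tr_refl_comp ρ] at this
  exact this ha

theorem zforce_sentence {A : ZFForm} (hA : A.IsSentence) {v : M.World}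
    (ρ ρ' : ℕ → M.Dom v) : zforce M A v ρ ↔ zforce M A v ρ' :=
  zforce_coincide A v ρ ρ' (fun k hk => by rw [ZFForm.IsSentence] at hA; simp [hA] at hk)

theorem zforce_rf (A : ZFForm) (x y : ℕ) : ∀ (hff : A.freeFor y x) (v : M.World)
    (ρ : ℕ → M.Dom v),
    zforce M (A.renameFree x y) v ρ ↔ zforce M A v (Function.update ρ x (ρ y)) := by
  induction A with
  | mem i j =>
      intro hff v ρ
      by_cases hi : i = x <;> by_cases hj : j = x <;>
        simp [ZFForm.renameFree, zforce, Function.update_apply, hi, hj]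
  | eq i j =>
      intro hff v ρ
      by_cases hi : i = x <;> by_cases hj : j = x <;>
        simp [ZFForm.renameFree, zforce, Function.update_apply, hi, hj]
  | bot => intro _ _ _; simp [ZFForm.renameFree, zforce]
  | top => intro _ _ _; simp [ZFForm.renameFree, zforce]
  | and A B ihA ihB =>
      intro hff v ρ
      simp only [ZFForm.renameFree, zforce]
      rw [ihA hff.1 v ρ, ihB hff.2 v ρ]
  | or A B ihA ihB =>
      intro hff v ρ
      simp only [ZFForm.renameFree, zforce]
      rw [ihA hff.1 v ρ, ihB hff.2 v ρ]
  | imp A B ihA ihB =>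
      intro hff v ρ
      simp only [ZFForm.renameFree, zforce]
      refine forall_congr' fun w => forall_congr' fun hw => ?_
      rw [ihA hff.1 w _, ihB hff.2 w _, tr_update hw ρ x (ρ y)]
  | all z A ih =>
      intro hff v ρ
      by_cases hz : z = x
      · subst hz
        have h1 : (ZFForm.all z A).renameFree z y = ZFForm.all z A := by
          simp [ZFForm.renameFree]
        rw [h1]
        exact zforce_coincide _ v _ _ (fun k hk => by
          have : k ≠ z := by simp [ZFForm.FV] at hk; exact hk.1
          simp [Function.update_apply, this])
      · rcases hff with hff | hff
        · have hxA : x ∉ A.FV := by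
            intro hmem; apply hff; simp [ZFForm.FV]; exact ⟨by omega, hmem⟩
          have h1 : (ZFForm.all z A).renameFree x y = ZFForm.all z A := by
            simp [ZFForm.renameFree, hz, ZFForm.rf_of_not_mem hxA]
          rw [h1]
          exact zforce_coincide _ v _ _ (fun k hk => by
            have : k ≠ x := by
              intro hkx; subst hkx
              simp [ZFForm.FV] at hk
              exact hxA hk.2
            simp [Function.update_apply, this])
        · obtain ⟨hyz, hffA⟩ := hff
          have h1 : (ZFForm.all z A).renameFree x y = ZFForm.all z (A.renameFree x y) := by
            simp [ZFForm.renameFree, hz]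
          rw [h1]
          simp only [zforce]
          refine forall_congr' fun w => forall_congr' fun hw => forall_congr' fun d => ?_
          rw [ih hffA w _]
          have e1 : (Function.update (fun n => M.tr hw (ρ n)) z d) y
              = M.tr hw (ρ y) := by
            simp [Function.update_apply, hyz]
          rw [e1]
          rw [Function.update_comm (show z ≠ x by omega)]
          rw [tr_update hw ρ x (ρ y)]
  | ex z A ih =>
      intro hff v ρ
      by_cases hz : z = x
      · subst hz
        have h1 : (ZFForm.ex z A).renameFree z y = ZFForm.ex z A := by
          simp [ZFForm.renameFree]
        rw [h1]
        exact zforce_coincide _ v _ _ (fun k hk => by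
          have : k ≠ z := by simp [ZFForm.FV] at hk; exact hk.1
          simp [Function.update_apply, this])
      · rcases hff with hff | hff
        · have hxA : x ∉ A.FV := by
            intro hmem; apply hff; simp [ZFForm.FV]; exact ⟨by omega, hmem⟩
          have h1 : (ZFForm.ex z A).renameFree x y = ZFForm.ex z A := by
            simp [ZFForm.renameFree, hz, ZFForm.rf_of_not_mem hxA]
          rw [h1]
          exact zforce_coincide _ v _ _ (fun k hk => by
            have : k ≠ x := by
              intro hkx; subst hkx
              simp [ZFForm.FV] at hk
              exact hxA hk.2
            simp [Function.update_apply, this])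
        · obtain ⟨hyz, hffA⟩ := hff
          have h1 : (ZFForm.ex z A).renameFree x y = ZFForm.ex z (A.renameFree x y) := by
            simp [ZFForm.renameFree, hz]
          rw [h1]
          simp only [zforce]
          refine exists_congr fun d => ?_
          rw [ih hffA v _]
          have e1 : (Function.update ρ z d) y = ρ y := by
            simp [Function.update_apply, hyz]
          rw [e1]
          rw [Function.update_comm (show z ≠ x by omega)]

theorem zforce_update_not_free {A : ZFForm} {x : ℕ} (hx : x ∉ A.FV) {v : M.World}
    (ρ : ℕ → M.Dom v) (d : M.Dom v) :
    zforce M A v (Function.update ρ x d) ↔ zforce M A v ρ :=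
  zforce_coincide A v _ _ (fun k hk => by
    have : k ≠ x := fun h => hx (h ▸ hk)
    simp [Function.update_apply, this])

end Semantics
/-! ### Section 5: soundness -/

section Soundness
variable {M : SetKripkeModel}

theorem soundness {S : Set ZFForm} {φ : ZFForm} (h : ZFProv S φ) (M : SetKripkeModel)
    (hS : ∀ A ∈ S, Forces M A) : Forces M φ := by
  induction h with
  | axm hA => exact hS _ hA
  | @k A B =>
      intro v ρ w1 h1 H1 w2 h2 H2
      exact zforce_mono A h2 _ H1
  | @s A B C =>
      intro v ρ w1 h1 H1 w2 h2 H2 w3 h3 H3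
      have hB : zforce M B w3 _ := H2 w3 h3 H3
      have hBC := H1 w3 (M.le_trans h2 h3)
      rw [← tr_trans_comp h2 h3] at hBC
      exact zforce_imp_elim (hBC H3) hB
  | @andI A B =>
      intro v ρ w1 h1 H1 w2 h2 H2
      exact ⟨zforce_mono A h2 _ H1, H2⟩
  | @andE1 A B =>
      intro v ρ w1 h1 H1
      exact H1.1
  | @andE2 A B =>
      intro v ρ w1 h1 H1
      exact H1.2
  | @orI1 A B =>
      intro v ρ w1 h1 H1
      exact Or.inl H1
  | @orI2 A B =>
      intro v ρ w1 h1 H1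
      exact Or.inr H1
  | @orE A B C =>
      intro v ρ w1 h1 H1 w2 h2 H2 w3 h3 H3
      rcases H3 with HA | HB
      · have := H1 w3 (M.le_trans h2 h3)
        rw [← tr_trans_comp h2 h3] at this
        exact this HA
      · exact H2 w3 h3 HB
  | @botE A =>
      intro v ρ w1 h1 H1
      exact H1.elim
  | topI => intro v ρ; trivial
  | @allE x y A hff =>
      intro v ρ w hw H
      rw [zforce_rf A x y hff w _]
      have := H w (M.le_refl w) ((fun n => M.tr hw (ρ n)) y)
      rwa [tr_refl_comp] at this
  | @exI x y A hff =>
      intro v ρ w hw H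
      rw [zforce_rf A x y hff w _] at H
      exact ⟨_, H⟩
  | @allShift x A B hx =>
      intro v ρ w1 h1 H w2 h2 HA w3 h3 d
      have Himp := H w3 (M.le_trans h2 h3) d
      have hA3 := zforce_mono A h3 _ HA
      rw [tr_trans_comp h2 h3 _] at hA3
      rw [tr_trans_comp h2 h3 _]
      exact zforce_imp_elim Himp ((zforce_update_not_free hx _ d).mpr hA3)
  | @exShift x A B hx =>
      intro v ρ w1 h1 H w2 h2 Hex
      rcases Hex with ⟨d, hd⟩
      have Himp := H w2 h2 d
      exact (zforce_update_not_free hx _ d).mp (zforce_imp_elim Himp hd)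
  | @mp A B hAB hA ih1 ih2 =>
      intro v ρ
      exact zforce_imp_elim (ih1 v ρ) (ih2 v ρ)
  | @gen x A hA ih =>
      intro v ρ w hw d
      exact ih w _

theorem forces_eqAxiom {A : ZFForm} (hA : A ∈ zfEqAxioms) : Forces M A := by
  rcases hA with ⟨i, rfl⟩ | ⟨i, j, rfl⟩ | ⟨i, j, k, rfl⟩ | ⟨i, j, k, rfl⟩ | ⟨i, j, k, rfl⟩
  · intro v ρ; rfl
  · intro v ρ w h H
    exact H.symm
  · intro v ρ w1 h1 H1 w2 h2 H2
    exact (congrArg (M.tr h2) H1).trans H2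
  · intro v ρ w1 h1 H1 w2 h2 H2
    have e : M.tr h1 (ρ i) = M.tr h1 (ρ j) := H1
    simp only [zforce] at H2 ⊢
    rwa [show M.tr h2 (M.tr h1 (ρ i)) = M.tr h2 (M.tr h1 (ρ j)) from congrArg _ e] at H2
  · intro v ρ w1 h1 H1 w2 h2 H2
    have e : M.tr h1 (ρ i) = M.tr h1 (ρ j) := H1
    simp only [zforce] at H2 ⊢
    rwa [show M.tr h2 (M.tr h1 (ρ i)) = M.tr h2 (M.tr h1 (ρ j)) from congrArg _ e] at H2

theorem thy_soundness {T : Set ZFForm} {φ : ZFForm} (h : thyProv T φ)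
    (M : SetKripkeModel) (hT : ∀ A ∈ T, Forces M A) : Forces M φ :=
  soundness h M (fun A hA => hA.elim (hT A) forces_eqAxiom)

end Soundness
/-! ### Section 6: derived quantifier rules, α-normalization -/

namespace ZFProv
variable {Ax : Set ZFForm} {A B Q X Y Z : ZFForm} {x y c : ℕ}

theorem allE_self : ZFProv Ax ((ZFForm.all x A).imp A) := by
  have h := allE (Ax := Ax) (x := x) (y := x) (A := A) ZFForm.freeFor_self
  rwa [ZFForm.rf_self] at h

theorem exI_self : ZFProv Ax (A.imp (ZFForm.ex x A)) := by
  have h := exI (Ax := Ax) (x := x) (y := x) (A := A) ZFForm.freeFor_self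
  rwa [ZFForm.rf_self] at h

theorem imp_all_intro (hx : x ∉ Q.FV) (h : ZFProv Ax (Q.imp A)) :
    ZFProv Ax (Q.imp (ZFForm.all x A)) :=
  (allShift hx).mp (gen h)

theorem all_mono (h : ZFProv Ax (A.imp B)) :
    ZFProv Ax ((ZFForm.all x A).imp (ZFForm.all x B)) :=
  imp_all_intro (by simp [ZFForm.FV]) (comp allE_self h)

theorem ex_mono (h : ZFProv Ax (A.imp B)) :
    ZFProv Ax ((ZFForm.ex x A).imp (ZFForm.ex x B)) :=
  (exShift (by simp [ZFForm.FV])).mp (gen (comp h exI_self))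

theorem allRen (hc : c ∉ A.FV) (hff : A.freeFor c x) :
    ZFProv Ax ((ZFForm.all x A).imp (ZFForm.all c (A.renameFree x c))) :=
  imp_all_intro (fun hmem => hc (Finset.mem_of_mem_erase hmem)) (allE hff)

theorem allRenRev (hc : c ∉ A.FV) (hff : A.freeFor c x) (hcx : c ≠ x) :
    ZFProv Ax ((ZFForm.all c (A.renameFree x c)).imp (ZFForm.all x A)) := by
  have h1 : ZFProv Ax ((ZFForm.all c (A.renameFree x c)).imp ((A.renameFree x c).renameFree c x)) :=
    allE (ZFForm.freeFor_rf hff hc)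
  rw [ZFForm.rf_cancel hff hc] at h1
  refine imp_all_intro ?_ h1
  intro hmem
  exact ZFForm.not_mem_FV_rf (fun h => hcx h.symm) (Finset.mem_of_mem_erase hmem)

theorem exRen (hc : c ∉ A.FV) (hff : A.freeFor c x) (hcx : c ≠ x) :
    ZFProv Ax ((ZFForm.ex x A).imp (ZFForm.ex c (A.renameFree x c))) := by
  have h1 : ZFProv Ax (((A.renameFree x c).renameFree c x).imp
      (ZFForm.ex c (A.renameFree x c))) := exI (ZFForm.freeFor_rf hff hc)
  rw [ZFForm.rf_cancel hff hc] at h1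
  refine (exShift ?_).mp (gen h1)
  intro hmem
  exact ZFForm.not_mem_FV_rf (fun h => hcx h.symm) (Finset.mem_of_mem_erase hmem)

theorem exRenRev (hc : c ∉ A.FV) (hff : A.freeFor c x) (hcx : c ≠ x) :
    ZFProv Ax ((ZFForm.ex c (A.renameFree x c)).imp (ZFForm.ex x A)) := by
  have h1 : ZFProv Ax ((A.renameFree x c).imp (ZFForm.ex x A)) := exI hff
  refine (exShift ?_).mp (gen h1)
  intro hmem
  exact hc (Finset.mem_of_mem_erase hmem)

/-- Pushing a universal quantifier through a context whose formulas do not contain `c`. -/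
theorem allShift_ctx {L : List ZFForm} (hL : ∀ F ∈ L, c ∉ F.FV) :
    ZFProv Ax ((ZFForm.all c (impCtx L X)).imp (impCtx L (ZFForm.all c X))) := by
  induction L with
  | nil => exact idThm
  | cons F L ih =>
      exact comp (allShift (hL F (List.mem_cons_self)))
        (bThm.mp (ih (fun G hG => hL G (List.mem_cons_of_mem _ hG))))

/-- Generalization over a fresh witness variable, under a context. -/
theorem all_intro_fresh {L : List ZFForm} (hc : c ∉ A.FV) (hff : A.freeFor c x)
    (hcx : c ≠ x) (hL : ∀ F ∈ L, c ∉ F.FV)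
    (h : ZFProv Ax (impCtx L (A.renameFree x c))) :
    ZFProv Ax (impCtx L (ZFForm.all x A)) := by
  have h1 := (allShift_ctx hL).mp (gen (x := c) h)
  exact (DerC.liftCtx (allRenRev hc hff hcx)).mp h1

/-- Existential elimination with a fresh witness variable, under a context. -/
theorem ex_elim_fresh {L : List ZFForm} (hc : c ∉ A.FV) (hff : A.freeFor c x)
    (hcx : c ≠ x) (hcB : c ∉ B.FV) (hL : ∀ F ∈ L, c ∉ F.FV)
    (h : ZFProv Ax (impCtx L ((A.renameFree x c).imp B))) :
    ZFProv Ax (impCtx L ((ZFForm.ex x A).imp B)) := by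
  have h1 := (allShift_ctx hL).mp (gen (x := c) h)
  have inner : ZFProv Ax ((ZFForm.all c ((A.renameFree x c).imp B)).imp
      ((ZFForm.ex c (A.renameFree x c)).imp B)) := exShift hcB
  have inner2 : ZFProv Ax (((ZFForm.ex c (A.renameFree x c)).imp B).imp
      ((ZFForm.ex x A).imp B)) := cThm.mp (exRen hc hff hcx)
  exact (DerC.liftCtx (comp inner inner2)).mp h1

theorem and_congr_prov (hA : ZFProv Ax (A.imp X)) (hB : ZFProv Ax (B.imp Y)) :
    ZFProv Ax ((A.and B).imp (X.and Y)) := by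
  have hmem : DerC Ax [A.and B] (A.and B) := DerC.hyp (by simp)
  have h : DerC Ax [A.and B] (X.and Y) :=
    DerC.andI (DerC.mp (DerC.of_prov hA) (DerC.andE1 hmem))
      (DerC.mp (DerC.of_prov hB) (DerC.andE2 hmem))
  exact h

theorem or_congr_prov (hA : ZFProv Ax (A.imp X)) (hB : ZFProv Ax (B.imp Y)) :
    ZFProv Ax ((A.or B).imp (X.or Y)) := by
  have hmem : DerC Ax [A.or B] (A.or B) := DerC.hyp (by simp)
  have hmA : DerC Ax [A, A.or B] A := DerC.hyp (by simp)
  have hmB : DerC Ax [B, A.or B] B := DerC.hyp (by simp)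
  have h : DerC Ax [A.or B] (X.or Y) :=
    DerC.orE hmem
      (DerC.orI1 (DerC.mp (DerC.of_prov hA) hmA))
      (DerC.orI2 (DerC.mp (DerC.of_prov hB) hmB))
  exact h

theorem imp_congr_prov (hA : ZFProv Ax (X.imp A)) (hB : ZFProv Ax (B.imp Y)) :
    ZFProv Ax ((A.imp B).imp (X.imp Y)) := by
  have h : DerC Ax [X, A.imp B] Y :=
    DerC.mp (DerC.of_prov hB)
      (DerC.mp (DerC.hyp (show A.imp B ∈ [X, A.imp B] by simp))
        (DerC.mp (DerC.of_prov hA) (DerC.hyp (by simp))))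
  exact DerC.impI h

end ZFProv

/-! ### α-normalization making all binders even -/

namespace ZFForm

/-- Rename all binders to fresh even variables. -/
def ev : ZFForm → ZFForm
  | .mem i j => .mem i j
  | .eq i j => .eq i j
  | .bot => .bot
  | .top => .top
  | .and A B => .and (ev A) (ev B)
  | .or A B => .or (ev A) (ev B)
  | .imp A B => .imp (ev A) (ev B)
  | .all x A => .all (2 * maxv (ev A)) ((ev A).renameFree x (2 * maxv (ev A)))
  | .ex x A => .ex (2 * maxv (ev A)) ((ev A).renameFree x (2 * maxv (ev A)))

theorem Good_ev (A : ZFForm) : Good (ev A) := by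
  induction A with
  | mem i j => trivial
  | eq i j => trivial
  | bot => trivial
  | top => trivial
  | and A B ihA ihB => exact ⟨ihA, ihB⟩
  | or A B ihA ihB => exact ⟨ihA, ihB⟩
  | imp A B ihA ihB => exact ⟨ihA, ihB⟩
  | all x A ih => exact ⟨⟨maxv (ev A), by ring⟩, Good_rf ih⟩
  | ex x A ih => exact ⟨⟨maxv (ev A), by ring⟩, Good_rf ih⟩

theorem mem_FV_rf_of {A : ZFForm} {x y z : ℕ} (hzx : z ≠ x) (hz : z ∈ FV A) :
    z ∈ FV (renameFree x y A) := by
  induction A with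
  | mem i j =>
      simp [FV] at hz
      simp only [renameFree, FV, Finset.mem_insert, Finset.mem_singleton]
      rcases hz with rfl | rfl
      · exact Or.inl (by rw [if_neg hzx])
      · exact Or.inr (by rw [if_neg hzx])
  | eq i j =>
      simp [FV] at hz
      simp only [renameFree, FV, Finset.mem_insert, Finset.mem_singleton]
      rcases hz with rfl | rfl
      · exact Or.inl (by rw [if_neg hzx])
      · exact Or.inr (by rw [if_neg hzx])
  | bot => simp [FV] at hz
  | top => simp [FV] at hz
  | and A B ihA ihB =>
      simp [FV] at hz
      simp only [renameFree, FV, Finset.mem_union]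
      rcases hz with hz | hz
      · exact Or.inl (ihA hz)
      · exact Or.inr (ihB hz)
  | or A B ihA ihB =>
      simp [FV] at hz
      simp only [renameFree, FV, Finset.mem_union]
      rcases hz with hz | hz
      · exact Or.inl (ihA hz)
      · exact Or.inr (ihB hz)
  | imp A B ihA ihB =>
      simp [FV] at hz
      simp only [renameFree, FV, Finset.mem_union]
      rcases hz with hz | hz
      · exact Or.inl (ihA hz)
      · exact Or.inr (ihB hz)
  | all w A ih =>
      simp [FV] at hz
      by_cases hw : w = x
      · subst hw
        simp [renameFree, FV]
        exact hz
      · simp [renameFree, hw, FV]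
        exact ⟨hz.1, ih hz.2⟩
  | ex w A ih =>
      simp [FV] at hz
      by_cases hw : w = x
      · subst hw
        simp [renameFree, FV]
        exact hz
      · simp [renameFree, hw, FV]
        exact ⟨hz.1, ih hz.2⟩

theorem FV_ev (A : ZFForm) : FV (ev A) = FV A := by
  induction A with
  | mem i j => rfl
  | eq i j => rfl
  | bot => rfl
  | top => rfl
  | and A B ihA ihB => simp [ev, FV, ihA, ihB]
  | or A B ihA ihB => simp [ev, FV, ihA, ihB]
  | imp A B ihA ihB => simp [ev, FV, ihA, ihB]
  | all x A ih =>
      ext z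
      simp only [ev, FV, Finset.mem_erase]
      constructor
      · rintro ⟨hzc, hz⟩
        rcases mem_FV_rf hz with h | h
        · exact absurd h hzc
        · exact ⟨h.2, ih ▸ h.1⟩
      · rintro ⟨hzx, hz⟩
        have hz' : z ∈ FV (ev A) := ih ▸ hz
        have hlt := lt_maxv hz'
        exact ⟨by omega, mem_FV_rf_of hzx hz'⟩
  | ex x A ih =>
      ext z
      simp only [ev, FV, Finset.mem_erase]
      constructor
      · rintro ⟨hzc, hz⟩
        rcases mem_FV_rf hz with h | h
        · exact absurd h hzc
        · exact ⟨h.2, ih ▸ h.1⟩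
      · rintro ⟨hzx, hz⟩
        have hz' : z ∈ FV (ev A) := ih ▸ hz
        have hlt := lt_maxv hz'
        exact ⟨by omega, mem_FV_rf_of hzx hz'⟩

end ZFForm

/-- `A` and its α-normalization `ev A` are interderivable. -/
theorem ev_equiv {Ax : Set ZFForm} (A : ZFForm) :
    ZFProv Ax (A.imp A.ev) ∧ ZFProv Ax (A.ev.imp A) := by
  induction A with
  | mem i j => exact ⟨ZFProv.idThm, ZFProv.idThm⟩
  | eq i j => exact ⟨ZFProv.idThm, ZFProv.idThm⟩
  | bot => exact ⟨ZFProv.idThm, ZFProv.idThm⟩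
  | top => exact ⟨ZFProv.idThm, ZFProv.idThm⟩
  | and A B ihA ihB =>
      exact ⟨ZFProv.and_congr_prov ihA.1 ihB.1, ZFProv.and_congr_prov ihA.2 ihB.2⟩
  | or A B ihA ihB =>
      exact ⟨ZFProv.or_congr_prov ihA.1 ihB.1, ZFProv.or_congr_prov ihA.2 ihB.2⟩
  | imp A B ihA ihB =>
      exact ⟨ZFProv.imp_congr_prov ihA.2 ihB.1, ZFProv.imp_congr_prov ihA.1 ihB.2⟩
  | all x A ih =>
      set c := 2 * ZFForm.maxv A.ev with hc
      have hcfv : c ∉ A.ev.FV := fun hmem => by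
        have := ZFForm.lt_maxv hmem; omega
      have hff : A.ev.freeFor c x := ZFForm.freeFor_of_maxv_le (by omega)
      by_cases hcx : c = x
      · constructor
        · refine ZFProv.comp (ZFProv.all_mono ih.1) ?_
          show ZFProv Ax ((ZFForm.all x A.ev).imp (ZFForm.ev (ZFForm.all x A)))
          have he : ZFForm.ev (ZFForm.all x A) = ZFForm.all x A.ev := by
            show ZFForm.all c (A.ev.renameFree x c) = _
            rw [hcx, ZFForm.rf_self]
          rw [he]; exact ZFProv.idThm
        · refine ZFProv.comp ?_ (ZFProv.all_mono ih.2)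
          show ZFProv Ax ((ZFForm.ev (ZFForm.all x A)).imp (ZFForm.all x A.ev))
          have he : ZFForm.ev (ZFForm.all x A) = ZFForm.all x A.ev := by
            show ZFForm.all c (A.ev.renameFree x c) = _
            rw [hcx, ZFForm.rf_self]
          rw [he]; exact ZFProv.idThm
      · constructor
        · exact ZFProv.comp (ZFProv.all_mono ih.1) (ZFProv.allRen hcfv hff)
        · exact ZFProv.comp (ZFProv.allRenRev hcfv hff hcx) (ZFProv.all_mono ih.2)
  | ex x A ih =>
      set c := 2 * ZFForm.maxv A.ev with hc
      have hcfv : c ∉ A.ev.FV := fun hmem => by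
        have := ZFForm.lt_maxv hmem; omega
      have hff : A.ev.freeFor c x := ZFForm.freeFor_of_maxv_le (by omega)
      by_cases hcx : c = x
      · constructor
        · refine ZFProv.comp (ZFProv.ex_mono ih.1) ?_
          have he : ZFForm.ev (ZFForm.ex x A) = ZFForm.ex x A.ev := by
            show ZFForm.ex c (A.ev.renameFree x c) = _
            rw [hcx, ZFForm.rf_self]
          rw [he]; exact ZFProv.idThm
        · refine ZFProv.comp ?_ (ZFProv.ex_mono ih.2)
          have he : ZFForm.ev (ZFForm.ex x A) = ZFForm.ex x A.ev := by
            show ZFForm.ex c (A.ev.renameFree x c) = _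
            rw [hcx, ZFForm.rf_self]
          rw [he]; exact ZFProv.idThm
      · constructor
        · exact ZFProv.comp (ZFProv.ex_mono ih.1) (ZFProv.exRen hcfv hff hcx)
        · exact ZFProv.comp (ZFProv.exRenRev hcfv hff hcx) (ZFProv.ex_mono ih.2)

/-- Replacing axioms by derivable formulas. -/
theorem ZFProv_axioms_mono {S S' : Set ZFForm} {A : ZFForm} (h : ZFProv S A)
    (hrepl : ∀ B ∈ S, ZFProv S' B) : ZFProv S' A := by
  induction h with
  | axm hA => exact hrepl _ hA
  | k => exact ZFProv.k
  | s => exact ZFProv.s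
  | andI => exact ZFProv.andI
  | andE1 => exact ZFProv.andE1
  | andE2 => exact ZFProv.andE2
  | orI1 => exact ZFProv.orI1
  | orI2 => exact ZFProv.orI2
  | orE => exact ZFProv.orE
  | botE => exact ZFProv.botE
  | topI => exact ZFProv.topI
  | allE hff => exact ZFProv.allE hff
  | exI hff => exact ZFProv.exI hff
  | allShift hx => exact ZFProv.allShift hx
  | exShift hx => exact ZFProv.exShift hx
  | mp _ _ ih1 ih2 => exact ih1.mp ih2
  | gen _ ih => exact ih.gen
/-! ### Section 7a: set contexts, enumeration, constants -/

/-- Derivability from a set of hypotheses (via finite contexts). -/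
def DerS (Ax : Set ZFForm) (Γ : Set ZFForm) (A : ZFForm) : Prop :=
  ∃ L : List ZFForm, (∀ x ∈ L, x ∈ Γ) ∧ DerC Ax L A

namespace DerS
variable {Ax Γ Γ' : Set ZFForm} {A B C : ZFForm}

theorem of_prov (h : ZFProv Ax A) : DerS Ax Γ A := ⟨[], by simp, DerC.of_prov h⟩

theorem hyp (h : A ∈ Γ) : DerS Ax Γ A := ⟨[A], by simpa, DerC.hyp (by simp)⟩

theorem mono (hs : Γ ⊆ Γ') (h : DerS Ax Γ A) : DerS Ax Γ' A := by
  obtain ⟨L, hL, d⟩ := h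
  exact ⟨L, fun x hx => hs (hL x hx), d⟩

theorem mp (h1 : DerS Ax Γ (A.imp B)) (h2 : DerS Ax Γ A) : DerS Ax Γ B := by
  obtain ⟨L1, hL1, d1⟩ := h1
  obtain ⟨L2, hL2, d2⟩ := h2
  refine ⟨L1 ++ L2, ?_, ?_⟩
  · intro x hx
    rcases List.mem_append.mp hx with hx | hx
    · exact hL1 x hx
    · exact hL2 x hx
  · exact DerC.mp (DerC.mono (fun x hx => List.mem_append.mpr (Or.inl hx)) d1)
      (DerC.mono (fun x hx => List.mem_append.mpr (Or.inr hx)) d2)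

theorem impI (h : DerS Ax (insert A Γ) B) : DerS Ax Γ (A.imp B) := by
  classical
  obtain ⟨L, hL, d⟩ := h
  refine ⟨L.filter (fun x => decide (x ∈ Γ)), ?_, ?_⟩
  · intro x hx
    have := List.mem_filter.mp hx
    simpa using this.2
  · apply DerC.impI
    apply DerC.mono ?_ d
    intro x hx
    by_cases hxΓ : x ∈ Γ
    · exact List.mem_cons_of_mem _ (List.mem_filter.mpr ⟨hx, by simpa⟩)
    · have hxA : x = A := by
        rcases hL x hx with h | h
        · exact h
        · exact absurd h hxΓ
      subst hxA
      exact List.mem_cons_self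

theorem cut (h1 : DerS Ax Γ A) (h2 : DerS Ax (insert A Γ) B) : DerS Ax Γ B :=
  mp (impI h2) h1

theorem orE' (h : DerS Ax Γ (A.or B)) (h1 : DerS Ax (insert A Γ) C)
    (h2 : DerS Ax (insert B Γ) C) : DerS Ax Γ C :=
  mp (mp (mp (of_prov ZFProv.orE) (impI h1)) (impI h2)) h

theorem botE' (h : DerS Ax Γ ZFForm.bot) : DerS Ax Γ A := mp (of_prov ZFProv.botE) h

theorem orI1' (h : DerS Ax Γ A) : DerS Ax Γ (A.or B) := mp (of_prov ZFProv.orI1) h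
theorem orI2' (h : DerS Ax Γ B) : DerS Ax Γ (A.or B) := mp (of_prov ZFProv.orI2) h
theorem andI' (h1 : DerS Ax Γ A) (h2 : DerS Ax Γ B) : DerS Ax Γ (A.and B) :=
  mp (mp (of_prov ZFProv.andI) h1) h2
theorem andE1' (h : DerS Ax Γ (A.and B)) : DerS Ax Γ A := mp (of_prov ZFProv.andE1) h
theorem andE2' (h : DerS Ax Γ (A.and B)) : DerS Ax Γ B := mp (of_prov ZFProv.andE2) h

/-- Existential elimination with a fresh witness. -/
theorem witness_elim {x c : ℕ} (hex : ZFForm.ex x A ∈ Γ)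
    (hder : DerS Ax (insert (A.renameFree x c) Γ) B)
    (hΓ : ∀ F ∈ Γ, c ∉ F.FV) (hcB : c ∉ B.FV) (hcA : c ∉ A.FV)
    (hff : A.freeFor c x) (hcx : c ≠ x) : DerS Ax Γ B := by
  obtain ⟨L, hL, d⟩ := impI hder
  have d2 := ZFProv.ex_elim_fresh hcA hff hcx hcB (fun F hF => hΓ F (hL F hF)) d
  exact mp ⟨L, hL, d2⟩ (hyp hex)

/-- Universal introduction with a fresh witness. -/
theorem all_intro_witness {x c : ℕ} (hder : DerS Ax Γ (A.renameFree x c))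
    (hΓ : ∀ F ∈ Γ, c ∉ F.FV) (hcA : c ∉ A.FV) (hff : A.freeFor c x) (hcx : c ≠ x) :
    DerS Ax Γ (ZFForm.all x A) := by
  obtain ⟨L, hL, d⟩ := hder
  exact ⟨L, hL, ZFProv.all_intro_fresh hcA hff hcx (fun F hF => hΓ F (hL F hF)) d⟩

end DerS

/-! #### Enumeration of formulas -/

namespace ZFForm

def enc : ZFForm → ℕ
  | .mem i j => Nat.pair 0 (Nat.pair i j)
  | .eq i j => Nat.pair 1 (Nat.pair i j)
  | .bot => Nat.pair 2 0
  | .top => Nat.pair 3 0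
  | .and A B => Nat.pair 4 (Nat.pair (enc A) (enc B))
  | .or A B => Nat.pair 5 (Nat.pair (enc A) (enc B))
  | .imp A B => Nat.pair 6 (Nat.pair (enc A) (enc B))
  | .all x A => Nat.pair 7 (Nat.pair x (enc A))
  | .ex x A => Nat.pair 8 (Nat.pair x (enc A))

theorem enc_inj : ∀ a b : ZFForm, enc a = enc b → a = b := by
  intro a
  induction a with
  | mem i j => intro b h; cases b <;> simp [enc, Nat.pair_eq_pair] at h <;> simp [h]
  | eq i j => intro b h; cases b <;> simp [enc, Nat.pair_eq_pair] at h <;> simp [h]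
  | bot => intro b h; cases b <;> simp [enc, Nat.pair_eq_pair] at h <;> rfl
  | top => intro b h; cases b <;> simp [enc, Nat.pair_eq_pair] at h <;> rfl
  | and A B ihA ihB =>
      intro b h; cases b <;> simp [enc, Nat.pair_eq_pair] at h
      rw [ihA _ h.1, ihB _ h.2]
  | or A B ihA ihB =>
      intro b h; cases b <;> simp [enc, Nat.pair_eq_pair] at h
      rw [ihA _ h.1, ihB _ h.2]
  | imp A B ihA ihB =>
      intro b h; cases b <;> simp [enc, Nat.pair_eq_pair] at h
      rw [ihA _ h.1, ihB _ h.2]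
  | all x A ih =>
      intro b h; cases b <;> simp [enc, Nat.pair_eq_pair] at h
      rw [h.1, ih _ h.2]
  | ex x A ih =>
      intro b h; cases b <;> simp [enc, Nat.pair_eq_pair] at h
      rw [h.1, ih _ h.2]

open Classical in
noncomputable def fenum : ℕ → ZFForm := fun n =>
  if h : ∃ A : ZFForm, enc A = n then h.choose else ZFForm.bot

theorem fenum_surj : Function.Surjective fenum := by
  intro A
  refine ⟨enc A, ?_⟩
  have h : ∃ B : ZFForm, enc B = enc A := ⟨A, rfl⟩
  simp only [fenum, dif_pos h]
  exact enc_inj _ _ h.choose_spec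

end ZFForm

/-! #### Constants -/

/-- The `j`-th constant of level `i` (an odd number). -/
def lconst (i j : ℕ) : ℕ := 2 * Nat.pair i j + 1

/-- `v` is a constant of some level `≤ i`. -/
def InC (i v : ℕ) : Prop := ∃ i' j, i' ≤ i ∧ v = lconst i' j

theorem lconst_not_even {i j : ℕ} : ¬ Even (lconst i j) := by
  simp [lconst, Nat.even_add_one, parity_simps]

theorem InC_not_even {i v : ℕ} (h : InC i v) : ¬ Even v := by
  obtain ⟨i', j, _, rfl⟩ := h; exact lconst_not_even

theorem InC_mono {i i' v : ℕ} (h : i ≤ i') (hv : InC i v) : InC i' v := by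
  obtain ⟨a, b, ha, rfl⟩ := hv; exact ⟨a, b, le_trans ha h, rfl⟩

theorem InC_base (i : ℕ) : InC i (lconst 0 0) := ⟨0, 0, Nat.zero_le _, rfl⟩

theorem right_le_pair (a b : ℕ) : b ≤ Nat.pair a b := by
  rw [Nat.pair]; split <;> nlinarith

theorem left_le_pair (a b : ℕ) : a ≤ Nat.pair a b := by
  rw [Nat.pair]; split <;> nlinarith

theorem not_InC_of_level {i j : ℕ} : ¬ InC i (lconst (i+1) j) := by
  rintro ⟨a, b, ha, hab⟩
  simp only [lconst] at hab
  have : Nat.pair a b = Nat.pair (i+1) j := by omega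
  have := Nat.pair_eq_pair.mp this
  omega
/-! ### Section 7b: the Lindenbaum construction -/

/-- A formula admissible at level `i`: good, with free variables among level-`≤ i` constants. -/
def StableAt (i : ℕ) (A : ZFForm) : Prop := A.Good ∧ ∀ v ∈ A.FV, InC i v

def LAdd (i b : ℕ) (G : ZFForm) (Δ : Set ZFForm) : Set ZFForm :=
  match G with
  | .ex x A => insert (A.renameFree x (lconst (i+1) (max b (ZFForm.maxv (ZFForm.ex x A)))))
      (insert (ZFForm.ex x A) Δ)
  | G => insert G Δ

theorem subset_LAdd {i b : ℕ} {G : ZFForm} {Δ : Set ZFForm} :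
    insert G Δ ⊆ LAdd i b G Δ := by
  cases G <;> simp [LAdd] <;> exact Set.subset_insert _ _

theorem LAdd_cases (i b : ℕ) (G : ZFForm) (Δ : Set ZFForm) :
    LAdd i b G Δ = insert G Δ ∨
    ∃ x A, G = ZFForm.ex x A ∧
      LAdd i b G Δ =
        insert (A.renameFree x (lconst (i+1) (max b (ZFForm.maxv G)))) (insert G Δ) := by
  cases G <;> first
    | exact Or.inr ⟨_, _, rfl, rfl⟩
    | exact Or.inl rfl

open Classical in
noncomputable def LStage (Ax : Set ZFForm) (i : ℕ) (Γ : Set ZFForm) (B : ZFForm) :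
    ℕ → Set ZFForm × ℕ
  | 0 => (Γ, 1)
  | (k+1) =>
      if StableAt (i+1) (ZFForm.fenum k) ∧
          ¬ DerS Ax (insert (ZFForm.fenum k) (LStage Ax i Γ B k).1) B then
        (LAdd i (LStage Ax i Γ B k).2 (ZFForm.fenum k) (LStage Ax i Γ B k).1,
         max (LStage Ax i Γ B k).2 (ZFForm.maxv (ZFForm.fenum k)) + 1)
      else LStage Ax i Γ B k

section Lindenbaum

variable {Ax : Set ZFForm} {i : ℕ} {Γ : Set ZFForm} {B : ZFForm}

theorem LStage_mono_succ (k : ℕ) :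
    (LStage Ax i Γ B k).1 ⊆ (LStage Ax i Γ B (k+1)).1 ∧
      (LStage Ax i Γ B k).2 ≤ (LStage Ax i Γ B (k+1)).2 := by
  rw [LStage]
  split
  · constructor
    · exact fun x hx => subset_LAdd (Set.mem_insert_of_mem _ hx)
    · simp; omega
  · exact ⟨le_refl _, le_refl _⟩

theorem LStage_mono {k m : ℕ} (h : k ≤ m) :
    (LStage Ax i Γ B k).1 ⊆ (LStage Ax i Γ B m).1 ∧
      (LStage Ax i Γ B k).2 ≤ (LStage Ax i Γ B m).2 := by
  induction m with
  | zero => have : k = 0 := by omega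
            subst this; exact ⟨subset_rfl, le_refl _⟩
  | succ m ih =>
      rcases Nat.lt_or_ge k (m+1) with hk | hk
      · have := ih (by omega)
        exact ⟨this.1.trans (LStage_mono_succ m).1, this.2.trans (LStage_mono_succ m).2⟩
      · have : k = m + 1 := by omega
        subst this; exact ⟨subset_rfl, le_refl _⟩

/-- The key freshness fact: the witness constant is fresh. -/
theorem fresh_const {b m : ℕ} (G : ZFForm) (hm : max b (ZFForm.maxv G) ≤ m)
    {F : ZFForm} (hF : F.Good ∧ ∀ v ∈ F.FV, InC i v ∨ ∃ j, j < b ∧ v = lconst (i+1) j) :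
    lconst (i+1) m ∉ F.FV := by
  intro hmem
  rcases hF.2 _ hmem with h | ⟨j, hj, hv⟩
  · exact not_InC_of_level h
  · simp only [lconst] at hv
    have := Nat.pair_eq_pair.mp (by omega : Nat.pair (i+1) j = Nat.pair (i+1) m)
    omega

theorem LStage_inv (hΓ : ∀ G ∈ Γ, StableAt i G)
    (hB : ∀ v ∈ B.FV, InC i v ∨ v = lconst (i+1) 0)
    (hnd : ¬ DerS Ax Γ B) (k : ℕ) :
    Γ ⊆ (LStage Ax i Γ B k).1 ∧ 1 ≤ (LStage Ax i Γ B k).2 ∧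
    (∀ G ∈ (LStage Ax i Γ B k).1, G.Good ∧
      ∀ v ∈ G.FV, InC i v ∨ ∃ j, j < (LStage Ax i Γ B k).2 ∧ v = lconst (i+1) j) ∧
    ¬ DerS Ax (LStage Ax i Γ B k).1 B := by
  induction k with
  | zero =>
      refine ⟨subset_rfl, le_refl _, ?_, hnd⟩
      intro G hG
      exact ⟨(hΓ G hG).1, fun v hv => Or.inl ((hΓ G hG).2 v hv)⟩
  | succ k ih =>
      obtain ⟨hsub, hb1, hstab, hni⟩ := ih
      rw [LStage]
      split
      · rename_i hcond
        obtain ⟨hGstab, hGnd⟩ := hcond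
        set Δ := (LStage Ax i Γ B k).1 with hΔ
        set b := (LStage Ax i Γ B k).2 with hb
        set G := ZFForm.fenum k with hG
        set m := max b (ZFForm.maxv G) with hm
        -- new-variable bound facts
        have hvbound : ∀ v ∈ G.FV, InC i v ∨ ∃ j, j < m + 1 ∧ v = lconst (i+1) j := by
          intro v hv
          rcases hGstab.2 v hv with ⟨i', j, hi', hvv⟩
          rcases Nat.lt_or_ge i' (i+1) with hlt | hge
          · exact Or.inl ⟨i', j, by omega, hvv⟩
          · have hi'' : i' = i + 1 := by omega
            subst hi''
            refine Or.inr ⟨j, ?_, hvv⟩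
            have h1 := right_le_pair (i+1) j
            have h2 := ZFForm.lt_maxv hv
            simp only [lconst] at hvv
            omega
        constructor
        · exact fun x hx => subset_LAdd (Set.mem_insert_of_mem _ (hsub hx))
        refine ⟨?_, ?_, ?_⟩
        · show 1 ≤ max b (ZFForm.maxv G) + 1
          omega
        · -- stability of new stage
          show ∀ H ∈ LAdd i b G Δ, H.Good ∧
            ∀ v ∈ H.FV, InC i v ∨ ∃ j, j < max b (ZFForm.maxv G) + 1 ∧ v = lconst (i+1) j
          intro H hH
          rcases LAdd_cases i b G Δ with hcase | ⟨x, A, hGex, hcase⟩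
          · rw [hcase] at hH
            rcases hH with rfl | hH
            · exact ⟨hGstab.1, fun v hv => hvbound v hv⟩
            · refine ⟨(hstab H hH).1, fun v hv => ?_⟩
              rcases (hstab H hH).2 v hv with h | ⟨j, hj, hv'⟩
              · exact Or.inl h
              · exact Or.inr ⟨j, by omega, hv'⟩
          · rw [hcase] at hH
            rcases hH with rfl | rfl | hH
            · -- the witness formula
              have hGoodA : A.Good := by
                have h := hGstab.1; rw [hGex] at h; exact h.2
              refine ⟨ZFForm.Good_rf hGoodA, fun v hv => ?_⟩
              rcases ZFForm.mem_FV_rf hv with rfl | ⟨hvA, hvx⟩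
              · exact Or.inr ⟨max b (ZFForm.maxv G), by omega, rfl⟩
              · have hvG : v ∈ G.FV := by
                  rw [hGex]; simp [ZFForm.FV]; exact ⟨hvx, hvA⟩
                rcases hvbound v hvG with h | ⟨j, hj, hv'⟩
                · exact Or.inl h
                · exact Or.inr ⟨j, by omega, hv'⟩
            · exact ⟨hGstab.1, fun v hv => hvbound v hv⟩
            · refine ⟨(hstab H hH).1, fun v hv => ?_⟩
              rcases (hstab H hH).2 v hv with h | ⟨j, hj, hv'⟩
              · exact Or.inl h
              · exact Or.inr ⟨j, by omega, hv'⟩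
        · -- non-derivability is preserved
          show ¬ DerS Ax (LAdd i b G Δ) B
          rcases LAdd_cases i b G Δ with hcase | ⟨x, A, hGex, hcase⟩
          · rw [hcase]; exact hGnd
          · rw [hcase]
            intro hd
            apply hGnd
            have hGoodA : A.Good := by
              have h := hGstab.1; rw [hGex] at h; exact h.2
            have hxEven : Even x := by
              have h := hGstab.1; rw [hGex] at h; exact h.1
            have hcodd : ¬ Even (lconst (i+1) (max b (ZFForm.maxv G))) := lconst_not_even
            have hcx : lconst (i+1) (max b (ZFForm.maxv G)) ≠ x := fun h => hcodd (h ▸ hxEven)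
            have hcG : lconst (i+1) (max b (ZFForm.maxv G)) ∉ G.FV := by
              intro hmem
              have h1 := ZFForm.lt_maxv hmem
              have h2 := right_le_pair (i+1) (max b (ZFForm.maxv G))
              simp only [lconst] at h1
              omega
            have hcA : lconst (i+1) (max b (ZFForm.maxv G)) ∉ A.FV := by
              intro hmem
              apply hcG
              have hmem2 : lconst (i+1) (max b (ZFForm.maxv G)) ∈ (ZFForm.ex x A).FV := by
                simp [ZFForm.FV]; exact ⟨hcx, hmem⟩
              rw [← hGex] at hmem2
              exact hmem2
            have hex : ZFForm.ex x A ∈ insert G Δ := by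
              rw [hGex]; exact Set.mem_insert _ _
            refine DerS.witness_elim hex hd ?_ ?_ hcA
              (ZFForm.freeFor_of_good_odd hGoodA hcodd) hcx
            · intro F hF
              rcases hF with rfl | hF
              · exact hcG
              · exact fresh_const (i := i) G (le_refl _) (hstab F hF)
            · intro hmem
              rcases hB _ hmem with h | h
              · exact not_InC_of_level h
              · simp only [lconst] at h
                have h3 := Nat.pair_eq_pair.mp
                  (by omega : Nat.pair (i+1) 0 = Nat.pair (i+1) (max b (ZFForm.maxv G)))
                omega
      · exact ⟨hsub, hb1, hstab, hni⟩

end Lindenbaum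

theorem lindenbaum (Ax : Set ZFForm) (i : ℕ) (Γ : Set ZFForm) (B : ZFForm)
    (hΓ : ∀ G ∈ Γ, StableAt i G)
    (hB : ∀ v ∈ B.FV, InC i v ∨ v = lconst (i+1) 0)
    (hnd : ¬ DerS Ax Γ B) :
    ∃ Δ : Set ZFForm, Γ ⊆ Δ ∧ B ∉ Δ ∧
      (∀ G ∈ Δ, StableAt (i+1) G) ∧
      (∀ G, StableAt (i+1) G → DerS Ax Δ G → G ∈ Δ) ∧
      (∀ X Y, X.or Y ∈ Δ → X ∈ Δ ∨ Y ∈ Δ) ∧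
      (∀ x A, ZFForm.ex x A ∈ Δ → ∃ c, InC (i+1) c ∧ A.renameFree x c ∈ Δ) ∧
      ZFForm.bot ∉ Δ := by
  set Δinf : Set ZFForm := {A | ∃ k, A ∈ (LStage Ax i Γ B k).1} with hΔ
  have hstage := LStage_inv (Ax := Ax) hΓ hB hnd
  have hlist : ∀ L : List ZFForm, (∀ x ∈ L, x ∈ Δinf) →
      ∃ k, ∀ x ∈ L, x ∈ (LStage Ax i Γ B k).1 := by
    intro L
    induction L with
    | nil => exact fun _ => ⟨0, by simp⟩
    | cons F L ih =>
        intro hL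
        obtain ⟨k1, hk1⟩ := ih (fun x hx => hL x (List.mem_cons_of_mem _ hx))
        obtain ⟨k2, hk2⟩ := hL F (List.mem_cons_self)
        refine ⟨max k1 k2, ?_⟩
        intro x hx
        rcases List.mem_cons.mp hx with rfl | hx
        · exact (LStage_mono (le_max_right k1 k2)).1 hk2
        · exact (LStage_mono (le_max_left k1 k2)).1 (hk1 x hx)
  have hDerInf : ∀ X, DerS Ax Δinf X → ∃ k, DerS Ax (LStage Ax i Γ B k).1 X := by
    rintro X ⟨L, hL, d⟩
    obtain ⟨k, hk⟩ := hlist L hL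
    exact ⟨k, L, hk, d⟩
  have hndinf : ¬ DerS Ax Δinf B := by
    intro hd
    obtain ⟨k, hk⟩ := hDerInf B hd
    exact (hstage k).2.2.2 hk
  have hsubInf : ∀ k, (LStage Ax i Γ B k).1 ⊆ Δinf := fun k x hx => ⟨k, hx⟩
  have hstabInf : ∀ G ∈ Δinf, StableAt (i+1) G := by
    rintro G ⟨k, hk⟩
    refine ⟨((hstage k).2.2.1 G hk).1, fun v hv => ?_⟩
    rcases ((hstage k).2.2.1 G hk).2 v hv with h | ⟨j, _, rfl⟩
    · exact InC_mono (by omega) h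
    · exact ⟨i+1, j, le_refl _, rfl⟩
  have hstep : ∀ G : ZFForm, StableAt (i+1) G → G ∉ Δinf →
      DerS Ax (insert G Δinf) B := by
    intro G hGstab hG
    obtain ⟨k, hk⟩ := ZFForm.fenum_surj G
    have hnotadd : ¬ (StableAt (i+1) (ZFForm.fenum k) ∧
        ¬ DerS Ax (insert (ZFForm.fenum k) (LStage Ax i Γ B k).1) B) := by
      intro hcond
      apply hG
      refine hsubInf (k+1) ?_
      have heq : (LStage Ax i Γ B (k+1)).1
          = LAdd i (LStage Ax i Γ B k).2 (ZFForm.fenum k) (LStage Ax i Γ B k).1 := by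
        rw [LStage, if_pos hcond]
      rw [heq, ← hk]
      exact subset_LAdd (Set.mem_insert _ _)
    rw [hk] at hnotadd
    have hder : DerS Ax (insert G (LStage Ax i Γ B k).1) B := by
      by_contra hcon
      exact hnotadd ⟨hGstab, hcon⟩
    exact DerS.mono (Set.insert_subset_insert (hsubInf k)) hder
  refine ⟨Δinf, fun x hx => hsubInf 0 hx, ?_, hstabInf, ?_, ?_, ?_, ?_⟩
  · intro hBinf
    exact hndinf (DerS.hyp hBinf)
  · intro G hGstab hGder
    by_contra hG
    exact hndinf (DerS.cut hGder (hstep G hGstab hG))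
  · intro X Y hXY
    by_contra hcon
    push_neg at hcon
    have hs := hstabInf _ hXY
    have hXs : StableAt (i+1) X :=
      ⟨hs.1.1, fun v hv => hs.2 v (by simp [ZFForm.FV]; exact Or.inl hv)⟩
    have hYs : StableAt (i+1) Y :=
      ⟨hs.1.2, fun v hv => hs.2 v (by simp [ZFForm.FV]; exact Or.inr hv)⟩
    exact hndinf (DerS.orE' (DerS.hyp hXY) (hstep X hXs hcon.1) (hstep Y hYs hcon.2))
  · intro x A hex
    obtain ⟨k, hk⟩ := ZFForm.fenum_surj (ZFForm.ex x A)
    have hcond : StableAt (i+1) (ZFForm.fenum k) ∧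
        ¬ DerS Ax (insert (ZFForm.fenum k) (LStage Ax i Γ B k).1) B := by
      rw [hk]
      refine ⟨hstabInf _ hex, ?_⟩
      intro hd
      apply hndinf
      have hss : insert (ZFForm.ex x A) (LStage Ax i Γ B k).1 ⊆ Δinf :=
        Set.insert_subset_iff.mpr ⟨hex, hsubInf k⟩
      exact DerS.mono hss hd
    refine ⟨lconst (i+1) (max (LStage Ax i Γ B k).2 (ZFForm.maxv (ZFForm.ex x A))),
      ⟨i+1, _, le_refl _, rfl⟩, ?_⟩
    refine hsubInf (k+1) ?_
    have heq : (LStage Ax i Γ B (k+1)).1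
        = LAdd i (LStage Ax i Γ B k).2 (ZFForm.fenum k) (LStage Ax i Γ B k).1 := by
      rw [LStage, if_pos hcond]
    rw [heq, hk]
    exact Set.mem_insert _ _
  · intro hbot
    exact hndinf (DerS.botE' (DerS.hyp hbot))
/-! ### Section 7c: the canonical model -/

/-- The base axioms: α-normalized theory plus equality axioms. -/
def S0 (T : Set ZFForm) : Set ZFForm := (ZFForm.ev '' T) ∪ zfEqAxioms

theorem eqAx_sub (T : Set ZFForm) : zfEqAxioms ⊆ S0 T := Set.subset_union_right

/-- Worlds of the canonical model. -/
structure CWorld (T : Set ZFForm) where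
  lvl : ℕ
  th : Set ZFForm
  stable : ∀ A ∈ th, StableAt lvl A
  closed : ∀ A, StableAt lvl A → DerS (S0 T) th A → A ∈ th
  prime : ∀ X Y : ZFForm, X.or Y ∈ th → X ∈ th ∨ Y ∈ th
  henkin : ∀ (x : ℕ) (A : ZFForm), ZFForm.ex x A ∈ th →
      ∃ c, InC lvl c ∧ A.renameFree x c ∈ th
  consis : ZFForm.bot ∉ th

namespace CWorld
variable {T : Set ZFForm}

theorem ext' {w w' : CWorld T} (h1 : w.lvl = w'.lvl) (h2 : w.th = w'.th) : w = w' := by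
  cases w; cases w'; simp_all

theorem eqax1 {w : CWorld T} {v : ℕ} (hv : InC w.lvl v) : ZFForm.eq v v ∈ w.th := by
  refine w.closed _ ⟨trivial, ?_⟩
    (DerS.of_prov (ZFProv.axm (eqAx_sub T (Or.inl ⟨v, rfl⟩))))
  intro u hu
  simp [ZFForm.FV] at hu
  subst hu; exact hv

theorem fv_mem {w : CWorld T} {a b : ℕ} (h : ZFForm.eq a b ∈ w.th) :
    InC w.lvl a ∧ InC w.lvl b := by
  have hst := w.stable _ h
  exact ⟨hst.2 a (by simp [ZFForm.FV]), hst.2 b (by simp [ZFForm.FV])⟩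

theorem eqax_symm {w : CWorld T} {a b : ℕ} (h : ZFForm.eq a b ∈ w.th) :
    ZFForm.eq b a ∈ w.th := by
  obtain ⟨ha, hb⟩ := fv_mem h
  refine w.closed _ ⟨trivial, ?_⟩
    (DerS.mp (DerS.of_prov (ZFProv.axm (eqAx_sub T (Or.inr (Or.inl ⟨a, b, rfl⟩)))))
      (DerS.hyp h))
  intro u hu
  simp [ZFForm.FV] at hu
  rcases hu with rfl | rfl
  · exact hb
  · exact ha

theorem eqax_trans {w : CWorld T} {a b c : ℕ} (h1 : ZFForm.eq a b ∈ w.th)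
    (h2 : ZFForm.eq b c ∈ w.th) : ZFForm.eq a c ∈ w.th := by
  obtain ⟨ha, _⟩ := fv_mem h1
  obtain ⟨_, hc⟩ := fv_mem h2
  refine w.closed _ ⟨trivial, ?_⟩
    (DerS.mp (DerS.mp (DerS.of_prov (ZFProv.axm (eqAx_sub T
      (Or.inr (Or.inr (Or.inl ⟨a, b, c, rfl⟩)))))) (DerS.hyp h1)) (DerS.hyp h2))
  intro u hu
  simp [ZFForm.FV] at hu
  rcases hu with rfl | rfl
  · exact ha
  · exact hc

theorem memax_left {w : CWorld T} {a a' b : ℕ} (h : ZFForm.eq a a' ∈ w.th)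
    (hm : ZFForm.mem a b ∈ w.th) : ZFForm.mem a' b ∈ w.th := by
  obtain ⟨ha, ha'⟩ := fv_mem h
  have hb : InC w.lvl b := (w.stable _ hm).2 b (by simp [ZFForm.FV])
  refine w.closed _ ⟨trivial, ?_⟩
    (DerS.mp (DerS.mp (DerS.of_prov (ZFProv.axm (eqAx_sub T
      (Or.inr (Or.inr (Or.inr (Or.inl ⟨a, a', b, rfl⟩))))))) (DerS.hyp h)) (DerS.hyp hm))
  intro u hu
  simp [ZFForm.FV] at hu
  rcases hu with rfl | rfl
  · exact ha'
  · exact hb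

theorem memax_right {w : CWorld T} {a b b' : ℕ} (h : ZFForm.eq b b' ∈ w.th)
    (hm : ZFForm.mem a b ∈ w.th) : ZFForm.mem a b' ∈ w.th := by
  obtain ⟨hb, hb'⟩ := fv_mem h
  have ha : InC w.lvl a := (w.stable _ hm).2 a (by simp [ZFForm.FV])
  refine w.closed _ ⟨trivial, ?_⟩
    (DerS.mp (DerS.mp (DerS.of_prov (ZFProv.axm (eqAx_sub T
      (Or.inr (Or.inr (Or.inr (Or.inr ⟨b, b', a, rfl⟩))))))) (DerS.hyp h)) (DerS.hyp hm))
  intro u hu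
  simp [ZFForm.FV] at hu
  rcases hu with rfl | rfl
  · exact ha
  · exact hb'

end CWorld

/-- Carriers of the canonical domains. -/
def CVar {T : Set ZFForm} (w : CWorld T) : Type := {v : ℕ // InC w.lvl v}

instance cSetoid {T : Set ZFForm} (w : CWorld T) : Setoid (CVar w) where
  r a b := ZFForm.eq a.1 b.1 ∈ w.th
  iseqv := by
    refine ⟨fun a => CWorld.eqax1 a.2, fun h => CWorld.eqax_symm h,
      fun h1 h2 => CWorld.eqax_trans h1 h2⟩

/-- The canonical Kripke model over the theory `T`. -/
noncomputable def CanonM (T : Set ZFForm) : SetKripkeModel where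
  World := CWorld T
  le w w' := w.lvl ≤ w'.lvl ∧ w.th ⊆ w'.th
  le_refl w := ⟨le_refl _, subset_rfl⟩
  le_trans h1 h2 := ⟨le_trans h1.1 h2.1, h1.2.trans h2.2⟩
  le_antisymm h1 h2 := CWorld.ext' (le_antisymm h1.1 h2.1) (subset_antisymm h1.2 h2.2)
  Dom w := Quotient (cSetoid w)
  dne w := ⟨⟦⟨lconst 0 0, InC_base _⟩⟧⟩
  tr {v w} h := Quotient.map (fun a => ⟨a.1, InC_mono h.1 a.2⟩) (fun a b hab => h.2 hab)
  tr_refl v h x := by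
    induction x using Quotient.ind
    exact congrArg (Quotient.mk _) rfl
  tr_trans h1 h2 h3 x := by
    induction x using Quotient.ind
    exact congrArg (Quotient.mk _) rfl
  mem w := Quotient.lift₂ (fun a b => ZFForm.mem a.1 b.1 ∈ w.th)
    (by
      intro a b a' b' ha hb
      refine propext ⟨fun h => ?_, fun h => ?_⟩
      · exact CWorld.memax_right hb (CWorld.memax_left ha h)
      · exact CWorld.memax_right (CWorld.eqax_symm hb)
          (CWorld.memax_left (CWorld.eqax_symm ha) h))
  mem_mono {v w} h x y := by
    induction x using Quotient.ind
    induction y using Quotient.ind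
    exact fun hm => h.2 hm

open Classical in
/-- The canonical assignment. -/
noncomputable def rcan {T : Set ZFForm} (w : CWorld T) : ℕ → (CanonM T).Dom w := fun k =>
  if h : InC w.lvl k then Quotient.mk _ ⟨k, h⟩ else Quotient.mk _ ⟨lconst 0 0, InC_base _⟩

theorem rcan_spec {T : Set ZFForm} {w : CWorld T} {k : ℕ} (hk : InC w.lvl k) :
    rcan w k = Quotient.mk _ ⟨k, hk⟩ := by
  unfold rcan
  exact dif_pos hk

theorem tr_rcan {T : Set ZFForm} {w w' : CWorld T} (h : (CanonM T).le w w') {k : ℕ}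
    (hk : InC w.lvl k) : (CanonM T).tr h (rcan w k) = rcan w' k := by
  rw [rcan_spec hk, rcan_spec (InC_mono h.1 hk)]
  rfl
/-! ### Section 7d: the truth lemma -/

theorem ZFForm.fsize_pos (A : ZFForm) : 1 ≤ A.fsize := by
  cases A <;> simp [ZFForm.fsize]

section TruthLemma
variable {T : Set ZFForm}

theorem zforce_tr_rcan {w w' : CWorld T} (hle : (CanonM T).le w w') (X : ZFForm)
    (hX : ∀ k ∈ X.FV, InC w.lvl k) :
    zforce (CanonM T) X w' (fun n => (CanonM T).tr hle (rcan w n)) ↔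
      zforce (CanonM T) X w' (rcan w') :=
  zforce_coincide (M := CanonM T) X w' _ _ (fun k hk => tr_rcan hle (hX k hk))

theorem all_transfer {w w' : CWorld T} (hle : (CanonM T).le w w') {A : ZFForm} {x c : ℕ}
    (hc : InC w'.lvl c) (hFV : ∀ k, k ∈ A.FV → k ≠ x → InC w.lvl k) (hff : A.freeFor c x) :
    zforce (CanonM T) A w'
        (Function.update (fun n => (CanonM T).tr hle (rcan w n)) x (Quotient.mk _ ⟨c, hc⟩)) ↔
      zforce (CanonM T) (A.renameFree x c) w' (rcan w') := by
  refine Iff.trans ?_ (zforce_rf (M := CanonM T) A x c hff w' (rcan w')).symm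
  apply zforce_coincide (M := CanonM T)
  intro k hk
  by_cases hkx : k = x
  · subst hkx
    simp only [Function.update_self]
    rw [rcan_spec hc]
    exact Function.update_self _ _ _
  · exact (Function.update_of_ne hkx _ _).trans
      ((tr_rcan hle (hFV k hk hkx)).trans (Function.update_of_ne hkx _ _).symm)

theorem truth_lemma : ∀ (N : ℕ) (A : ZFForm), A.fsize ≤ N →
    ∀ (w : CWorld T), StableAt w.lvl A →
    (zforce (CanonM T) A w (rcan w) ↔ A ∈ w.th) := by
  intro N
  induction N with
  | zero =>
      intro A hA _ _
      exact absurd hA (by have := ZFForm.fsize_pos A; omega)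
  | succ N ih =>
      intro A hA w hst
      cases A with
      | mem i j =>
          have hi : InC w.lvl i := hst.2 i (by simp [ZFForm.FV])
          have hj : InC w.lvl j := hst.2 j (by simp [ZFForm.FV])
          simp only [zforce]
          rw [rcan_spec hi, rcan_spec hj]
          exact Iff.rfl
      | eq i j =>
          have hi : InC w.lvl i := hst.2 i (by simp [ZFForm.FV])
          have hj : InC w.lvl j := hst.2 j (by simp [ZFForm.FV])
          simp only [zforce]
          rw [rcan_spec hi, rcan_spec hj]
          exact ⟨fun h => Quotient.exact h, fun h => Quotient.sound h⟩
      | bot =>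
          exact ⟨fun h => h.elim, fun h => (w.consis h).elim⟩
      | top =>
          exact ⟨fun _ => w.closed _ ⟨trivial, by simp [ZFForm.FV]⟩
            (DerS.of_prov ZFProv.topI), fun _ => trivial⟩
      | and A B =>
          have hAst : StableAt w.lvl A :=
            ⟨hst.1.1, fun v hv => hst.2 v (by simp [ZFForm.FV]; exact Or.inl hv)⟩
          have hBst : StableAt w.lvl B :=
            ⟨hst.1.2, fun v hv => hst.2 v (by simp [ZFForm.FV]; exact Or.inr hv)⟩
          have hAs : A.fsize ≤ N := by simp [ZFForm.fsize] at hA; omega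
          have hBs : B.fsize ≤ N := by simp [ZFForm.fsize] at hA; omega
          constructor
          · rintro ⟨ha, hb⟩
            exact w.closed _ hst (DerS.andI'
              (DerS.hyp ((ih A hAs w hAst).mp ha)) (DerS.hyp ((ih B hBs w hBst).mp hb)))
          · intro h
            exact ⟨(ih A hAs w hAst).mpr (w.closed _ hAst (DerS.andE1' (DerS.hyp h))),
              (ih B hBs w hBst).mpr (w.closed _ hBst (DerS.andE2' (DerS.hyp h)))⟩
      | or A B =>
          have hAst : StableAt w.lvl A :=
            ⟨hst.1.1, fun v hv => hst.2 v (by simp [ZFForm.FV]; exact Or.inl hv)⟩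
          have hBst : StableAt w.lvl B :=
            ⟨hst.1.2, fun v hv => hst.2 v (by simp [ZFForm.FV]; exact Or.inr hv)⟩
          have hAs : A.fsize ≤ N := by simp [ZFForm.fsize] at hA; omega
          have hBs : B.fsize ≤ N := by simp [ZFForm.fsize] at hA; omega
          constructor
          · rintro (ha | hb)
            · exact w.closed _ hst (DerS.orI1' (DerS.hyp ((ih A hAs w hAst).mp ha)))
            · exact w.closed _ hst (DerS.orI2' (DerS.hyp ((ih B hBs w hBst).mp hb)))
          · intro h
            rcases w.prime _ _ h with h' | h'
            · exact Or.inl ((ih A hAs w hAst).mpr h')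
            · exact Or.inr ((ih B hBs w hBst).mpr h')
      | imp A B =>
          have hAst : StableAt w.lvl A :=
            ⟨hst.1.1, fun v hv => hst.2 v (by simp [ZFForm.FV]; exact Or.inl hv)⟩
          have hBst : StableAt w.lvl B :=
            ⟨hst.1.2, fun v hv => hst.2 v (by simp [ZFForm.FV]; exact Or.inr hv)⟩
          have hAs : A.fsize ≤ N := by simp [ZFForm.fsize] at hA; omega
          have hBs : B.fsize ≤ N := by simp [ZFForm.fsize] at hA; omega
          constructor
          · intro hz
            by_contra hmem
            have hnd : ¬ DerS (S0 T) (insert A w.th) B := by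
              intro hd
              exact hmem (w.closed _ hst (DerS.impI hd))
            have hΓ : ∀ G ∈ insert A w.th, StableAt w.lvl G := by
              intro G hG
              rcases hG with rfl | hG
              · exact hAst
              · exact w.stable _ hG
            obtain ⟨Δ, hsub, hBnot, hstabΔ, hclosedΔ, hprimeΔ, hhenkinΔ, hconsisΔ⟩ :=
              lindenbaum (S0 T) w.lvl (insert A w.th) B hΓ
                (fun v hv => Or.inl (hBst.2 v hv)) hnd
            set w' : CWorld T := ⟨w.lvl + 1, Δ, hstabΔ, hclosedΔ, hprimeΔ, hhenkinΔ, hconsisΔ⟩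
              with hw'def
            have hlvl : w'.lvl = w.lvl + 1 := by rw [hw'def]
            have hle : (CanonM T).le w w' :=
              ⟨by omega, fun x hx => hsub (Set.mem_insert_of_mem _ hx)⟩
            have hA' : A ∈ w'.th := hsub (Set.mem_insert _ _)
            have hAst' : StableAt w'.lvl A :=
              ⟨hAst.1, fun v hv => InC_mono (by omega) (hAst.2 v hv)⟩
            have hBst' : StableAt w'.lvl B :=
              ⟨hBst.1, fun v hv => InC_mono (by omega) (hBst.2 v hv)⟩
            have hzA : zforce (CanonM T) A w' (fun n => (CanonM T).tr hle (rcan w n)) :=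
              (zforce_tr_rcan hle A hAst.2).mpr ((ih A hAs w' hAst').mpr hA')
            have hzB := hz w' hle hzA
            have hB' : B ∈ w'.th :=
              (ih B hBs w' hBst').mp ((zforce_tr_rcan hle B hBst.2).mp hzB)
            exact hBnot hB'
          · intro h
            intro w' hle hzA
            have hAst' : StableAt w'.lvl A :=
              ⟨hAst.1, fun v hv => InC_mono hle.1 (hAst.2 v hv)⟩
            have hBst' : StableAt w'.lvl B :=
              ⟨hBst.1, fun v hv => InC_mono hle.1 (hBst.2 v hv)⟩
            have hA' : A ∈ w'.th :=
              (ih A hAs w' hAst').mp ((zforce_tr_rcan hle A hAst.2).mp hzA)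
            have hB' : B ∈ w'.th :=
              w'.closed _ hBst' (DerS.mp (DerS.hyp (hle.2 h)) (DerS.hyp hA'))
            exact (zforce_tr_rcan hle B hBst.2).mpr ((ih B hBs w' hBst').mpr hB')
      | all x A =>
          have hxEven : Even x := hst.1.1
          have hGoodA : A.Good := hst.1.2
          have hFVA : ∀ k, k ∈ A.FV → k ≠ x → InC w.lvl k := by
            intro k hk hkx
            exact hst.2 k (by simp [ZFForm.FV]; exact ⟨hkx, hk⟩)
          have hAs : ∀ c, (A.renameFree x c).fsize ≤ N := by
            intro c
            rw [ZFForm.fsize_rf]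
            simp [ZFForm.fsize] at hA; omega
          constructor
          · intro hz
            by_contra hmem
            set c0 := lconst (w.lvl + 1) 0 with hc0
            have hc0odd : ¬ Even c0 := lconst_not_even
            have hff0 : A.freeFor c0 x := ZFForm.freeFor_of_good_odd hGoodA hc0odd
            have hc0x : c0 ≠ x := fun h => hc0odd (h ▸ hxEven)
            have hc0A : c0 ∉ A.FV := by
              intro hmem'
              exact not_InC_of_level (hFVA c0 hmem' hc0x)
            have hΓc0 : ∀ F ∈ w.th, c0 ∉ F.FV := by
              intro F hF hmem'
              exact not_InC_of_level ((w.stable _ hF).2 _ hmem')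
            have hnd : ¬ DerS (S0 T) w.th (A.renameFree x c0) := by
              intro hd
              exact hmem (w.closed _ hst
                (DerS.all_intro_witness hd hΓc0 hc0A hff0 hc0x))
            obtain ⟨Δ, hsub, hBnot, hstabΔ, hclosedΔ, hprimeΔ, hhenkinΔ, hconsisΔ⟩ :=
              lindenbaum (S0 T) w.lvl w.th (A.renameFree x c0) (w.stable)
                (by
                  intro v hv
                  rcases ZFForm.mem_FV_rf hv with rfl | ⟨hvA, hvx⟩
                  · exact Or.inr rfl
                  · exact Or.inl (hFVA v hvA hvx)) hnd
            set w' : CWorld T := ⟨w.lvl + 1, Δ, hstabΔ, hclosedΔ, hprimeΔ, hhenkinΔ, hconsisΔ⟩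
              with hw'def
            have hlvl : w'.lvl = w.lvl + 1 := by rw [hw'def]
            have hle : (CanonM T).le w w' := ⟨by omega, hsub⟩
            have hc0w' : InC w'.lvl c0 := ⟨w.lvl + 1, 0, le_refl _, rfl⟩
            have hB0st' : StableAt w'.lvl (A.renameFree x c0) := by
              refine ⟨ZFForm.Good_rf hGoodA, ?_⟩
              intro v hv
              rcases ZFForm.mem_FV_rf hv with rfl | ⟨hvA, hvx⟩
              · exact hc0w'
              · exact InC_mono (by omega) (hFVA v hvA hvx)
            have hzA := hz w' hle (Quotient.mk _ ⟨c0, hc0w'⟩)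
            have hzB0 : zforce (CanonM T) (A.renameFree x c0) w' (rcan w') :=
              (all_transfer hle hc0w' hFVA hff0).mp hzA
            exact hBnot ((ih _ (hAs c0) w' hB0st').mp hzB0)
          · intro h
            intro w' hle d
            obtain ⟨⟨c, hc⟩, rfl⟩ := Quotient.exists_rep d
            have hcodd : ¬ Even c := InC_not_even hc
            have hff : A.freeFor c x := ZFForm.freeFor_of_good_odd hGoodA hcodd
            have hBst' : StableAt w'.lvl (A.renameFree x c) := by
              refine ⟨ZFForm.Good_rf hGoodA, ?_⟩
              intro v hv
              rcases ZFForm.mem_FV_rf hv with rfl | ⟨hvA, hvx⟩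
              · exact hc
              · exact InC_mono hle.1 (hFVA v hvA hvx)
            have hB'mem : A.renameFree x c ∈ w'.th := by
              refine w'.closed _ hBst' ?_
              exact DerS.mp (DerS.of_prov (ZFProv.allE hff)) (DerS.hyp (hle.2 h))
            exact (all_transfer hle hc hFVA hff).mpr
              ((ih _ (hAs c) w' hBst').mpr hB'mem)
      | ex x A =>
          have hxEven : Even x := hst.1.1
          have hGoodA : A.Good := hst.1.2
          have hFVA : ∀ k, k ∈ A.FV → k ≠ x → InC w.lvl k := by
            intro k hk hkx
            exact hst.2 k (by simp [ZFForm.FV]; exact ⟨hkx, hk⟩)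
          have hAs : ∀ c, (A.renameFree x c).fsize ≤ N := by
            intro c
            rw [ZFForm.fsize_rf]
            simp [ZFForm.fsize] at hA; omega
          constructor
          · rintro ⟨d, hd⟩
            obtain ⟨⟨c, hc⟩, rfl⟩ := Quotient.exists_rep d
            have hcodd : ¬ Even c := InC_not_even hc
            have hff : A.freeFor c x := ZFForm.freeFor_of_good_odd hGoodA hcodd
            have hBst : StableAt w.lvl (A.renameFree x c) := by
              refine ⟨ZFForm.Good_rf hGoodA, ?_⟩
              intro v hv
              rcases ZFForm.mem_FV_rf hv with rfl | ⟨hvA, hvx⟩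
              · exact hc
              · exact hFVA v hvA hvx
            have hd' : zforce (CanonM T) A w (Function.update (rcan w) x (rcan w c)) := by
              refine (zforce_coincide (M := CanonM T) A w _ _ ?_).mp hd
              intro k hk
              by_cases hkx : k = x
              · subst hkx
                simp only [Function.update_self]
                rw [rcan_spec hc]
                exact Function.update_self _ _ _
              · exact (Function.update_of_ne hkx _ _).trans (Function.update_of_ne hkx _ _).symm
            have hzB : zforce (CanonM T) (A.renameFree x c) w (rcan w) :=
              (zforce_rf (M := CanonM T) A x c hff w (rcan w)).mpr hd' 
            have hBmem := (ih _ (hAs c) w hBst).mp hzB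
            exact w.closed _ hst
              (DerS.mp (DerS.of_prov (ZFProv.exI hff)) (DerS.hyp hBmem))
          · intro h
            obtain ⟨c, hc, hBmem⟩ := w.henkin x A h
            have hcodd : ¬ Even c := InC_not_even hc
            have hff : A.freeFor c x := ZFForm.freeFor_of_good_odd hGoodA hcodd
            have hBst : StableAt w.lvl (A.renameFree x c) := by
              refine ⟨ZFForm.Good_rf hGoodA, ?_⟩
              intro v hv
              rcases ZFForm.mem_FV_rf hv with rfl | ⟨hvA, hvx⟩
              · exact hc
              · exact hFVA v hvA hvx
            have hzB := (ih _ (hAs c) w hBst).mpr hBmem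
            exact ⟨rcan w c, (zforce_rf (M := CanonM T) A x c hff w (rcan w)).mp hzB⟩

end TruthLemma
/-! ### Section 8: completeness, bridges, model constructions -/

section Completeness
variable {T : Set ZFForm}

theorem S0_imp_thy {X : ZFForm} (h : ZFProv (S0 T) X) : thyProv T X := by
  refine ZFProv_axioms_mono h ?_
  rintro B (⟨φ, hφ, rfl⟩ | hB)
  · exact (ev_equiv φ).1.mp (ZFProv.axm (Or.inl hφ))
  · exact ZFProv.axm (Or.inr hB)

/-- Semantic bridge: `ev ψ` and `ψ` are forced at the same points of any model. -/
theorem zforce_ev_iff {M : SetKripkeModel} {ψ : ZFForm} (v : M.World) (ρ : ℕ → M.Dom v) :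
    zforce M (ZFForm.ev ψ) v ρ ↔ zforce M ψ v ρ := by
  constructor
  · intro h
    exact zforce_imp_elim
      (soundness (S := zfEqAxioms) (ev_equiv ψ).2 M (fun A hA => forces_eqAxiom hA) v ρ) h
  · intro h
    exact zforce_imp_elim
      (soundness (S := zfEqAxioms) (ev_equiv ψ).1 M (fun A hA => forces_eqAxiom hA) v ρ) h

/-- Completeness: an unprovable sentence is refuted somewhere in the canonical model. -/
theorem completeness {ψ : ZFForm} (hψ : ψ.IsSentence) (hnp : ¬ thyProv T ψ) :
    ∃ w : CWorld T, ¬ zforce (CanonM T) ψ w (rcan w) := by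
  have hnd : ¬ DerS (S0 T) ∅ (ZFForm.ev ψ) := by
    rintro ⟨L, hL, d⟩
    have hLnil : L = [] := by
      cases L with
      | nil => rfl
      | cons a L => exact absurd (hL a (List.mem_cons_self)) (Set.notMem_empty a)
    subst hLnil
    exact hnp ((ev_equiv ψ).2.mp (S0_imp_thy d))
  have hFVev : (ZFForm.ev ψ).FV = ∅ := by rw [ZFForm.FV_ev]; exact hψ
  obtain ⟨Δ, hsub, hBnot, hstabΔ, hclosedΔ, hprimeΔ, hhenkinΔ, hconsisΔ⟩ :=
    lindenbaum (S0 T) 0 ∅ (ZFForm.ev ψ) (by simp) (by simp [hFVev]) hnd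
  set w : CWorld T := ⟨1, Δ, hstabΔ, hclosedΔ, hprimeΔ, hhenkinΔ, hconsisΔ⟩
  have hstab : StableAt w.lvl (ZFForm.ev ψ) :=
    ⟨ZFForm.Good_ev ψ, by simp [hFVev]⟩
  have hnz : ¬ zforce (CanonM T) (ZFForm.ev ψ) w (rcan w) := by
    intro hz
    exact hBnot ((truth_lemma (ZFForm.ev ψ).fsize _ (le_refl _) w hstab).mp hz)
  exact ⟨w, fun hz => hnz ((zforce_ev_iff (M := CanonM T) (ψ := ψ) w (rcan w)).mpr hz)⟩

/-- Every world of the canonical model forces the theory. -/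
theorem canon_forces (hsent : ∀ φ ∈ T, φ.IsSentence) :
    ∀ φ ∈ T, Forces (CanonM T) φ := by
  intro φ hφ w ρ
  have hFVev : (ZFForm.ev φ).FV = ∅ := by rw [ZFForm.FV_ev]; exact hsent φ hφ
  have hstab : StableAt w.lvl (ZFForm.ev φ) := ⟨ZFForm.Good_ev φ, by simp [hFVev]⟩
  have hmem : ZFForm.ev φ ∈ w.th :=
    w.closed _ hstab (DerS.of_prov (ZFProv.axm (Or.inl ⟨φ, hφ, rfl⟩)))
  have hz : zforce (CanonM T) (ZFForm.ev φ) w (rcan w) :=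
    (truth_lemma (ZFForm.ev φ).fsize _ (le_refl _) w hstab).mpr hmem
  have hz' := (zforce_ev_iff w (rcan w)).mp hz
  exact (zforce_sentence (hsent φ hφ) ρ (rcan w)).mpr hz'

end Completeness

/-! #### Upward-closed submodels -/

def upModel (M : SetKripkeModel) (S : Set M.World)
    (hS : ∀ {v w : M.World}, M.le v w → v ∈ S → w ∈ S) : SetKripkeModel where
  World := {v // v ∈ S}
  le a b := M.le a.1 b.1
  le_refl a := M.le_refl a.1
  le_trans := M.le_trans
  le_antisymm h1 h2 := Subtype.ext (M.le_antisymm h1 h2)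
  Dom a := M.Dom a.1
  dne a := M.dne a.1
  tr := M.tr
  tr_refl a h x := M.tr_refl a.1 h x
  tr_trans := M.tr_trans
  mem a := M.mem a.1
  mem_mono := M.mem_mono

theorem zforce_up {M : SetKripkeModel} {S : Set M.World}
    {hS : ∀ {v w : M.World}, M.le v w → v ∈ S → w ∈ S} (A : ZFForm) :
    ∀ (a : (upModel M S hS).World) (ρ : ℕ → M.Dom a.1),
      zforce (upModel M S hS) A a ρ ↔ zforce M A a.1 ρ := by
  induction A with
  | mem i j => intro a ρ; exact Iff.rfl
  | eq i j => intro a ρ; exact Iff.rfl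
  | bot => intro a ρ; exact Iff.rfl
  | top => intro a ρ; exact Iff.rfl
  | and A B ihA ihB =>
      intro a ρ
      simp only [zforce]
      rw [ihA a ρ, ihB a ρ]
  | or A B ihA ihB =>
      intro a ρ
      simp only [zforce]
      rw [ihA a ρ, ihB a ρ]
  | imp A B ihA ihB =>
      intro a ρ
      simp only [zforce]
      constructor
      · intro H w hw ha
        have := H ⟨w, hS hw a.2⟩ hw ((ihA _ _).mpr ha)
        exact (ihB _ _).mp this
      · intro H b hb ha
        have := H b.1 hb ((ihA _ _).mp ha)
        exact (ihB _ _).mpr this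
  | all z A ih =>
      intro a ρ
      simp only [zforce]
      constructor
      · intro H w hw d
        exact (ih _ _).mp (H ⟨w, hS hw a.2⟩ hw d)
      · intro H b hb d
        exact (ih _ _).mpr (H b.1 hb d)
  | ex z A ih =>
      intro a ρ
      simp only [zforce]
      exact exists_congr fun d => ih a _

/-! #### Forcing in a root extension above the root -/

theorem zforce_toModel {M : SetKripkeModel} (E : RootExtension M) (A : ZFForm) :
    ∀ (v : M.World) (ρ : ℕ → M.Dom v),
      zforce E.toModel A (some v) ρ ↔ zforce M A v ρ := by
  induction A with
  | mem i j => intro v ρ; exact Iff.rfl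
  | eq i j => intro v ρ; exact Iff.rfl
  | bot => intro v ρ; exact Iff.rfl
  | top => intro v ρ; exact Iff.rfl
  | and A B ihA ihB =>
      intro v ρ
      simp only [zforce]
      rw [ihA v ρ, ihB v ρ]
  | or A B ihA ihB =>
      intro v ρ
      simp only [zforce]
      rw [ihA v ρ, ihB v ρ]
  | imp A B ihA ihB =>
      intro v ρ
      simp only [zforce]
      constructor
      · intro H w hw ha
        have := H (some w) hw ((ihA _ _).mpr ha)
        exact (ihB _ _).mp this
      · intro H b hb ha
        cases b with
        | none => exact hb.elim
        | some w =>
            have := H w hb ((ihA _ _).mp ha)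
            exact (ihB _ _).mpr this
  | all z A ih =>
      intro v ρ
      simp only [zforce]
      constructor
      · intro H w hw d
        exact (ih _ _).mp (H (some w) hw d)
      · intro H b hb d
        cases b with
        | none => exact hb.elim
        | some w => exact (ih _ _).mpr (H w hb d)
  | ex z A ih =>
      intro v ρ
      simp only [zforce]
      exact exists_congr fun d => ih v _
/-! ### Section 9: final assembly -/

theorem IsSentence_imp {X Y : ZFForm} (hX : X.IsSentence) (hY : Y.IsSentence) :
    (X.imp Y).IsSentence := by
  show (X.imp Y).FV = ∅
  simp only [ZFForm.FV, Finset.union_eq_empty]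
  exact ⟨hX, hY⟩

theorem IsSentence_or {X Y : ZFForm} (hX : X.IsSentence) (hY : Y.IsSentence) :
    (X.or Y).IsSentence := by
  show (X.or Y).FV = ∅
  simp only [ZFForm.FV, Finset.union_eq_empty]
  exact ⟨hX, hY⟩

theorem substZ_sentence {s : ℕ → ZFForm} (hs : ∀ n, (s n).IsSentence) (P : PropForm) :
    (substZ s P).IsSentence := by
  induction P with
  | var n => exact hs n
  | bot => rfl
  | top => rfl
  | and P Q ihP ihQ =>
      show ((substZ s P).and (substZ s Q)).FV = ∅
      simp only [ZFForm.FV, Finset.union_eq_empty]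
      exact ⟨ihP, ihQ⟩
  | or P Q ihP ihQ =>
      show ((substZ s P).or (substZ s Q)).FV = ∅
      simp only [ZFForm.FV, Finset.union_eq_empty]
      exact ⟨ihP, ihQ⟩
  | imp P Q ihP ihQ => exact IsSentence_imp ihP ihQ

theorem zforce_substZ_bigAnd {M : SetKripkeModel} {s : ℕ → ZFForm} (l : List PropForm)
    (v : M.World) (ρ : ℕ → M.Dom v) :
    zforce M (substZ s (bigAnd l)) v ρ ↔ ∀ F ∈ l, zforce M (substZ s F) v ρ := by
  induction l with
  | nil => simp [bigAnd, substZ, zforce]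
  | cons F l ih =>
      show zforce M ((substZ s F).and (substZ s (bigAnd l))) v ρ ↔ _
      simp only [zforce, ih, List.mem_cons]
      constructor
      · rintro ⟨h1, h2⟩ G (rfl | hG)
        · exact h1
        · exact h2 G hG
      · intro h
        exact ⟨h F (Or.inl rfl), fun G hG => h G (Or.inr hG)⟩

theorem bigOr_intro {Ax : Set ZFForm} {s : ℕ → ZFForm} {F : PropForm} {l : List PropForm}
    (h : F ∈ l) : ZFProv Ax ((substZ s F).imp (substZ s (bigOr l))) := by
  induction l with
  | nil => cases h
  | cons G l ih =>
      rcases List.mem_cons.mp h with rfl | h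
      · exact ZFProv.orI1
      · exact ZFProv.comp (ih h) ZFProv.orI2

theorem visser_final (T : Set ZFForm)
    (hsent : ∀ φ ∈ T, φ.IsSentence) (hext : Extensible T) :
    ∀ (n : ℕ) (A : Fin (n+2) → PropForm) (B : Fin n → PropForm) (C : PropForm),
      AdmZ (thyProv T) (visserPrem n A B C) (visserConc n A B C) := by
  intro n A B C s hs hprem
  have hanteS : (substZ s (visserAnte n A B)).IsSentence := substZ_sentence hs _
  have hAS : ∀ j : Fin (n+2), (substZ s (A j)).IsSentence := fun j => substZ_sentence hs _
  have hBS : ∀ i : Fin n, (substZ s (B i)).IsSentence := fun i => substZ_sentence hs _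
  have hCS : (substZ s C).IsSentence := substZ_sentence hs _
  have hprem' : thyProv T (((substZ s (visserAnte n A B)).imp
      ((substZ s (A ⟨n, by omega⟩)).or (substZ s (A ⟨n+1, by omega⟩)))).or
      (substZ s C)) := hprem
  have hconc_eq : substZ s (visserConc n A B C)
      = (substZ s (bigOr (List.ofFn fun j : Fin (n+2) =>
          (visserAnte n A B).imp (A j)))).or (substZ s C) := rfl
  by_cases hC : thyProv T (substZ s C)
  · rw [hconc_eq]
    exact ZFProv.orI2.mp hC
  by_cases hX : thyProv T ((substZ s (visserAnte n A B)).imp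
      ((substZ s (A ⟨n, by omega⟩)).or (substZ s (A ⟨n+1, by omega⟩))))
  · -- main case: premise's left disjunct is provable
    by_contra hconc
    have hDj : ∀ j : Fin (n+2),
        ¬ thyProv T ((substZ s (visserAnte n A B)).imp (substZ s (A j))) := by
      intro j h
      apply hconc
      rw [hconc_eq]
      refine ZFProv.orI1.mp ?_
      have hmem : ((visserAnte n A B).imp (A j)) ∈
          List.ofFn (fun j : Fin (n+2) => (visserAnte n A B).imp (A j)) :=
        List.mem_ofFn.mpr ⟨j, rfl⟩
      exact (bigOr_intro hmem).mp h
    have hui : ∀ j : Fin (n+2), ∃ u : CWorld T,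
        (∀ ρ, zforce (CanonM T) (substZ s (visserAnte n A B)) u ρ) ∧
        (∀ ρ, ¬ zforce (CanonM T) (substZ s (A j)) u ρ) := by
      intro j
      obtain ⟨w, hw⟩ := completeness (IsSentence_imp hanteS (hAS j)) (hDj j)
      simp only [zforce] at hw
      push_neg at hw
      obtain ⟨u, hle, hA', hnA⟩ := hw
      exact ⟨u, fun ρ => (zforce_sentence hanteS ρ _).mpr hA',
        fun ρ hz => hnA ((zforce_sentence (hAS j) _ ρ).mpr hz)⟩
    choose u hu1 hu2 using hui
    have hSup : ∀ {v w : (CanonM T).World}, (CanonM T).le v w →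
        v ∈ {v | ∃ j : Fin (n+2), (CanonM T).le (u j) v} →
        w ∈ {v | ∃ j : Fin (n+2), (CanonM T).le (u j) v} := by
      rintro v w hvw ⟨j, hj⟩
      exact ⟨j, (CanonM T).le_trans hj hvw⟩
    have hMUforces : ∀ φ ∈ (∅ : Set ZFForm) ∪ T,
        Forces (upModel (CanonM T) _ hSup) φ := by
      intro φ hφ a ρ
      have hφT : φ ∈ T := by simpa using hφ
      exact (zforce_up φ a ρ).mpr (canon_forces hsent φ hφT a.1 ρ)
    obtain ⟨E, hE⟩ := hext (upModel (CanonM T) _ hSup) hMUforces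
    have hρ0 : Nonempty E.RDom := E.rdne
    set ρ0 : ℕ → E.toModel.Dom none := fun _ => Classical.choice E.rdne with hρ0def
    have trans1 : ∀ (X : ZFForm) (a : (upModel (CanonM T) _ hSup).World)
        (ρ : ℕ → (CanonM T).Dom a.1),
        zforce E.toModel X (some a) ρ ↔ zforce (CanonM T) X a.1 ρ := by
      intro X a ρ
      exact (zforce_toModel E X a ρ).trans (zforce_up X a ρ)
    have persist : ∀ (X : ZFForm), X.IsSentence → zforce E.toModel X none ρ0 →
        ∀ (a : (upModel (CanonM T) _ hSup).World) (ρ : ℕ → (CanonM T).Dom a.1),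
        zforce (CanonM T) X a.1 ρ := by
      intro X hXs h a ρ
      have h2 := zforce_mono (M := E.toModel) X (v := none) (w := some a) trivial ρ0 h
      have h3 := (trans1 X a _).mp h2
      exact (zforce_sentence hXs _ _).mp h3
    have huS : ∀ j : Fin (n+2), u j ∈ {v | ∃ j : Fin (n+2), (CanonM T).le (u j) v} :=
      fun j => ⟨j, (CanonM T).le_refl _⟩
    have hXsound : zforce E.toModel ((substZ s (visserAnte n A B)).imp
        ((substZ s (A ⟨n, by omega⟩)).or (substZ s (A ⟨n+1, by omega⟩)))) none ρ0 :=
      thy_soundness hX E.toModel (fun φ hφ => hE φ hφ) none ρ0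
    by_cases hanteR : zforce E.toModel (substZ s (visserAnte n A B)) none ρ0
    · rcases zforce_imp_elim hXsound hanteR with h1 | h1
      · exact (hu2 ⟨n, by omega⟩ (rcan _))
          (persist _ (hAS _) h1 ⟨u ⟨n, by omega⟩, huS _⟩ (rcan _))
      · exact (hu2 ⟨n+1, by omega⟩ (rcan _))
          (persist _ (hAS _) h1 ⟨u ⟨n+1, by omega⟩, huS _⟩ (rcan _))
    · have hfail : ¬ ∀ F ∈ (List.ofFn fun i : Fin n =>
          (A (i.castLE (by omega))).imp (B i)),
          zforce E.toModel (substZ s F) none ρ0 := by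
        intro hall
        have hanteR2 : zforce E.toModel (substZ s (bigAnd (List.ofFn fun i : Fin n =>
            (A (i.castLE (by omega))).imp (B i)))) none ρ0 :=
          (zforce_substZ_bigAnd (M := E.toModel) (s := s) _ none ρ0).mpr hall
        exact hanteR hanteR2
      push_neg at hfail
      obtain ⟨F, hFmem, hFnz⟩ := hfail
      obtain ⟨i, rfl⟩ := List.mem_ofFn.mp hFmem
      have hFnz' : ¬ zforce E.toModel ((substZ s (A (i.castLE (by omega)))).imp
          (substZ s (B i))) none ρ0 := hFnz
      simp only [zforce] at hFnz'
      push_neg at hFnz'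
      obtain ⟨wopt, hle2, hzA, hznB⟩ := hFnz'
      cases wopt with
      | none =>
          have hzA0 : zforce E.toModel (substZ s (A (i.castLE (by omega)))) none ρ0 :=
            (zforce_sentence (hAS _) _ _).mp hzA
          exact (hu2 (i.castLE (by omega)) (rcan _))
            (persist _ (hAS _) hzA0 ⟨u (i.castLE (by omega)), huS _⟩ (rcan _))
      | some a =>
          obtain ⟨j, hja⟩ := a.2
          have hanteA : zforce (CanonM T) (substZ s (visserAnte n A B)) a.1
              (fun n => E.toModel.tr hle2 (ρ0 n)) :=
            (zforce_sentence hanteS _ _).mp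
              (zforce_mono (M := CanonM T) _ hja (rcan (u j)) (hu1 j (rcan (u j))))
          have hanteA2 : zforce (CanonM T) (substZ s (bigAnd (List.ofFn fun i : Fin n =>
              (A (i.castLE (by omega))).imp (B i)))) a.1
              (fun n => E.toModel.tr hle2 (ρ0 n)) := hanteA
          have hconj : zforce (CanonM T)
              (substZ s ((A (i.castLE (by omega))).imp (B i))) a.1
              (fun n => E.toModel.tr hle2 (ρ0 n)) := by
            have h5 := (zforce_substZ_bigAnd (M := CanonM T)
              (List.ofFn fun i : Fin n => (A (i.castLE (by omega))).imp (B i))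
              a.1 (fun n => E.toModel.tr hle2 (ρ0 n))).mp hanteA2
            exact h5 _ (List.mem_ofFn.mpr ⟨i, rfl⟩)
          have hBforce : zforce (CanonM T) (substZ s (B i)) a.1
              (fun n => E.toModel.tr hle2 (ρ0 n)) :=
            zforce_imp_elim hconj ((trans1 _ a _).mp hzA)
          exact hznB ((trans1 _ a _).mpr hBforce)
  · -- disjunction-property case: both disjuncts of the premise unprovable
    exfalso
    obtain ⟨w1, hw1⟩ := completeness (IsSentence_imp hanteS
      (IsSentence_or (hAS _) (hAS _))) hX
    obtain ⟨w2, hw2⟩ := completeness hCS hC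
    have hSup : ∀ {v w : (CanonM T).World}, (CanonM T).le v w →
        v ∈ {v | (CanonM T).le w1 v ∨ (CanonM T).le w2 v} →
        w ∈ {v | (CanonM T).le w1 v ∨ (CanonM T).le w2 v} := by
      rintro v w hvw (h | h)
      · exact Or.inl ((CanonM T).le_trans h hvw)
      · exact Or.inr ((CanonM T).le_trans h hvw)
    have hMUforces : ∀ φ ∈ (∅ : Set ZFForm) ∪ T,
        Forces (upModel (CanonM T) _ hSup) φ := by
      intro φ hφ a ρ
      have hφT : φ ∈ T := by simpa using hφ
      exact (zforce_up φ a ρ).mpr (canon_forces hsent φ hφT a.1 ρ)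
    obtain ⟨E, hE⟩ := hext (upModel (CanonM T) _ hSup) hMUforces
    set ρ0 : ℕ → E.toModel.Dom none := fun _ => Classical.choice E.rdne with hρ0def
    have trans1 : ∀ (X : ZFForm) (a : (upModel (CanonM T) _ hSup).World)
        (ρ : ℕ → (CanonM T).Dom a.1),
        zforce E.toModel X (some a) ρ ↔ zforce (CanonM T) X a.1 ρ := by
      intro X a ρ
      exact (zforce_toModel E X a ρ).trans (zforce_up X a ρ)
    have persist : ∀ (X : ZFForm), X.IsSentence → zforce E.toModel X none ρ0 →
        ∀ (a : (upModel (CanonM T) _ hSup).World) (ρ : ℕ → (CanonM T).Dom a.1),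
        zforce (CanonM T) X a.1 ρ := by
      intro X hXs h a ρ
      have h2 := zforce_mono (M := E.toModel) X (v := none) (w := some a) trivial ρ0 h
      have h3 := (trans1 X a _).mp h2
      exact (zforce_sentence hXs _ _).mp h3
    have hsound : zforce E.toModel (((substZ s (visserAnte n A B)).imp
        ((substZ s (A ⟨n, by omega⟩)).or (substZ s (A ⟨n+1, by omega⟩)))).or
        (substZ s C)) none ρ0 :=
      thy_soundness hprem' E.toModel (fun φ hφ => hE φ hφ) none ρ0
    rcases hsound with h | h
    · exact hw1 (persist _ (IsSentence_imp hanteS (IsSentence_or (hAS _) (hAS _))) h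
        ⟨w1, Or.inl ((CanonM T).le_refl _)⟩ (rcan w1))
    · exact hw2 (persist _ hCS h ⟨w2, Or.inr ((CanonM T).le_refl _)⟩ (rcan w2))

/-- If `T` is an extensible set theory (based on intuitionistic logic),
then all of Visser's rules `V_n` are admissible in `T`. -/
theorem visser_rules_admissible_of_extensible (T : Set ZFForm)
    (hsent : ∀ φ ∈ T, φ.IsSentence) (hext : Extensible T) :
    ∀ (n : ℕ) (A : Fin (n+2) → PropForm) (B : Fin n → PropForm) (C : PropForm),
      AdmZ (thyProv T) (visserPrem n A B C) (visserConc n A B C) :=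
  visser_final T hsent hext
end

section
/- Let ⊢ be a consequence relation for classical first-order logic CQC (having the same theorems as CQC) that satisfies C(x̄) ⊢ ∀x̄ C(x̄) for all formulas C. Then for every unifiable formula A and every formula B, if the rule A/B is admissible in CQC (A ⊢~_CQC B) then A ⊢ B. In other words, CQC is almost structurally complete: every admissible rule with unifiable premise is derivable. -/
set_option autoImplicit false
set_option linter.unusedVariables false

/-! ## First-order formulas over a language of predicate symbols -/

/-- First-order formulas over a language `P`, where `P n` is the type of `n`-ary predicate
symbols; the terms are the variables `x_i` (represented by natural numbers). -/
inductive FOForm (P : ℕ → Type) : Type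
  | pred : {n : ℕ} → P n → (Fin n → ℕ) → FOForm P
  | bot : FOForm P
  | top : FOForm P
  | and : FOForm P → FOForm P → FOForm P
  | or : FOForm P → FOForm P → FOForm P
  | imp : FOForm P → FOForm P → FOForm P
  | all : ℕ → FOForm P → FOForm P
  | ex : ℕ → FOForm P → FOForm P

namespace FOForm
variable {P : ℕ → Type}

/-- Negation is defined by `¬A := A → ⊥`. -/
def neg (A : FOForm P) : FOForm P := A.imp .bot

/-- The free variables of a first-order formula. -/
def FV : FOForm P → Finset ℕ
  | .pred _ args => Finset.image args Finset.univ
  | .bot => ∅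
  | .top => ∅
  | .and A B => A.FV ∪ B.FV
  | .or A B => A.FV ∪ B.FV
  | .imp A B => A.FV ∪ B.FV
  | .all x A => A.FV.erase x
  | .ex x A => A.FV.erase x

/-- Rename the free occurrences of the variable `x` to `y`. -/
def renameFree (x y : ℕ) : FOForm P → FOForm P
  | .pred p args => .pred p (fun i => if args i = x then y else args i)
  | .bot => .bot
  | .top => .top
  | .and A B => .and (A.renameFree x y) (B.renameFree x y)
  | .or A B => .or (A.renameFree x y) (B.renameFree x y)
  | .imp A B => .imp (A.renameFree x y) (B.renameFree x y)
  | .all z A => if z = x then .all z A else .all z (A.renameFree x y)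
  | .ex z A => if z = x then .ex z A else .ex z (A.renameFree x y)

/-- `y` is free for (substitutable for) `x`: no free occurrence of `x` lies in the scope
of a quantifier binding `y`. -/
def freeFor (y x : ℕ) : FOForm P → Prop
  | .pred _ _ => True
  | .bot => True
  | .top => True
  | .and A B => freeFor y x A ∧ freeFor y x B
  | .or A B => freeFor y x A ∧ freeFor y x B
  | .imp A B => freeFor y x A ∧ freeFor y x B
  | .all z A => x ∉ (FOForm.all z A).FV ∨ (y ≠ z ∧ freeFor y x A)
  | .ex z A => x ∉ (FOForm.ex z A).FV ∨ (y ≠ z ∧ freeFor y x A)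

end FOForm

/-- The language of pure first-order logic: countably many predicate symbols in every arity. -/
abbrev PureLang : ℕ → Type := fun _ => ℕ

/-- Formulas of pure first-order logic. -/
abbrev LForm := FOForm PureLang

/-- A substitution from the formulas of first-order logic to the formulas of a theory in the
language `P`: it commutes with `⊥`, `⊤`, the connectives and the quantifiers, and (as it is
induced by an assignment sending each predicate symbol `R` to a formula whose number of free
variables is at most the arity of `R`) the free variables of the image of an atomic formula
`R(x_{i_1}, …, x_{i_n})` are among `x_{i_1}, …, x_{i_n}`. -/
structure FOSubst (P : ℕ → Type) where
  app : LForm → FOForm P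
  map_bot : app .bot = .bot
  map_top : app .top = .top
  map_and : ∀ A B, app (A.and B) = (app A).and (app B)
  map_or : ∀ A B, app (A.or B) = (app A).or (app B)
  map_imp : ∀ A B, app (A.imp B) = (app A).imp (app B)
  map_all : ∀ x A, app (.all x A) = .all x (app A)
  map_ex : ∀ x A, app (.ex x A) = .ex x (app A)
  fv_pred : ∀ {n : ℕ} (p : PureLang n) (args : Fin n → ℕ),
      (app (.pred p args)).FV ⊆ Finset.image args Finset.univ

/-- Substitution of formulas (of a theory in the language `P`) for propositional letters. -/
def substF {P : ℕ → Type} (s : ℕ → FOForm P) : PropForm → FOForm P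
  | .var n => s n
  | .bot => .bot
  | .top => .top
  | .and A B => (substF s A).and (substF s B)
  | .or A B => (substF s A).or (substF s B)
  | .imp A B => (substF s A).imp (substF s B)

/-- The admissibility relation `Γ ⊢~ Δ` of a theory with provability predicate `Pr`:
whenever all premises are provable under a substitution, so is one of the conclusions. -/
def FOAdm {P : ℕ → Type} (Pr : FOForm P → Prop) (Γ Δ : Finset LForm) : Prop :=
  ∀ σ : FOSubst P, (∀ A ∈ Γ, Pr (σ.app A)) → ∃ B ∈ Δ, Pr (σ.app B)

/-- `A` is a tautology of the theory: `⊤ ⊢~ A`. -/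
def IsTautologyOf {P : ℕ → Type} (Pr : FOForm P → Prop) (A : LForm) : Prop :=
  FOAdm Pr {FOForm.top} {A}

/-- `A` is a tautology of the theory, in the equivalent form `T ⊢ σ(A)` for all `σ`. -/
def FOTaut {P : ℕ → Type} (Pr : FOForm P → Prop) (A : LForm) : Prop :=
  ∀ σ : FOSubst P, Pr (σ.app A)

/-- The first-order logic `QL(T)` of a theory: all its first-order tautologies. -/
def QLogicOf {P : ℕ → Type} (Pr : FOForm P → Prop) : Set LForm := {A | FOTaut Pr A}

/-- The propositional logic `L(T)` of a theory: all its propositional tautologies.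
(Propositional letters are nullary predicates, so they get substituted by sentences.) -/
def PLogicOf {P : ℕ → Type} (Pr : FOForm P → Prop) : Set PropForm :=
  {A | ∀ s : ℕ → FOForm P, (∀ n, (s n).FV = ∅) → Pr (substF s A)}

/-- The propositional logic of a theory, defined with substitutions of arbitrary
`T`-formulas for propositional letters. -/
def PLogicOfF {P : ℕ → Type} (Pr : FOForm P → Prop) : Set PropForm :=
  {A | ∀ s : ℕ → FOForm P, Pr (substF s A)}

/-- The propositional rule `A / B` is admissible in the theory (substituting sentences). -/
def AdmThy {P : ℕ → Type} (Pr : FOForm P → Prop) (A B : PropForm) : Prop :=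
  ∀ s : ℕ → FOForm P, (∀ n, (s n).FV = ∅) → Pr (substF s A) → Pr (substF s B)

/-- The propositional rule `A / B` is admissible in the theory (substituting formulas). -/
def AdmThyF {P : ℕ → Type} (Pr : FOForm P → Prop) (A B : PropForm) : Prop :=
  ∀ s : ℕ → FOForm P, Pr (substF s A) → Pr (substF s B)

/-! ## Classical (Tarskian) semantics for first-order logic -/

/-- A classical first-order structure for the language `P`. -/
structure FOStruct (P : ℕ → Type) where
  D : Type
  dne : Nonempty D
  interp : ∀ {n : ℕ}, P n → (Fin n → D) → Prop

/-- Classical satisfaction of a formula under a variable assignment. -/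
def fsat {P : ℕ → Type} (M : FOStruct P) : FOForm P → (ℕ → M.D) → Prop
  | .pred p args, ρ => M.interp p (fun i => ρ (args i))
  | .bot, _ => False
  | .top, _ => True
  | .and A B, ρ => fsat M A ρ ∧ fsat M B ρ
  | .or A B, ρ => fsat M A ρ ∨ fsat M B ρ
  | .imp A B, ρ => fsat M A ρ → fsat M B ρ
  | .all x A, ρ => ∀ d : M.D, fsat M A (Function.update ρ x d)
  | .ex x A, ρ => ∃ d : M.D, fsat M A (Function.update ρ x d)

/-- Validity in classical first-order logic `CQC` (equivalently, by completeness,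
provability in `CQC`). -/
def CQCValid {P : ℕ → Type} (A : FOForm P) : Prop :=
  ∀ (M : FOStruct P) (ρ : ℕ → M.D), fsat M A ρ

/-- A formula of first-order logic is unifiable (in `CQC`) if some substitution instance of
it is provable in `CQC`. -/
def UnifiableCQC (A : LForm) : Prop := ∃ σ : FOSubst PureLang, CQCValid (σ.app A)

/-- A ground substitution: it assigns `⊤` or `⊥` to the atomic formulas
(so its range consists of formulas built up from `⊤` and `⊥`). -/
def IsGroundSubst (σ : FOSubst PureLang) : Prop :=
  ∀ {n : ℕ} (p : PureLang n) (args : Fin n → ℕ),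
    σ.app (.pred p args) = FOForm.top ∨ σ.app (.pred p args) = FOForm.bot

/-- The rule `A / B` is admissible in `CQC`. -/
def AdmCQC (A B : LForm) : Prop :=
  ∀ σ : FOSubst PureLang, CQCValid (σ.app A) → CQCValid (σ.app B)

/-! ## Consequence relations -/

/-- A (single-premise) consequence relation in the language `P`: reflexive, transitive,
closed under weakening by theorems and under modus ponens. `der ⊤ A` expresses that `A`
is a theorem of the consequence relation. -/
structure ConsRel (P : ℕ → Type) where
  der : FOForm P → FOForm P → Prop
  refl : ∀ A, der A A
  trans : ∀ {A B C}, der A B → der B C → der A C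
  thm_mono : ∀ {A B}, der .top B → der A B
  mp : ∀ {A B C}, der A (B.imp C) → der A B → der A C


/-! ### Auxiliary machinery for Statement 18 -/

section Aux18

open Classical

/-- Satisfaction only depends on the assignment on free variables. -/
theorem fsat_congr {P : ℕ → Type} (N : FOStruct P) :
    ∀ (C : FOForm P) (ρ₁ ρ₂ : ℕ → N.D), (∀ x ∈ C.FV, ρ₁ x = ρ₂ x) →
      (fsat N C ρ₁ ↔ fsat N C ρ₂) := by
  intro C
  induction C with
  | pred p args =>
    intro ρ₁ ρ₂ h
    have : (fun i => ρ₁ (args i)) = fun i => ρ₂ (args i) := by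
      funext i
      exact h (args i) (by simp [FOForm.FV])
    simp only [fsat, this]
  | bot => intro _ _ _; rfl
  | top => intro _ _ _; rfl
  | and C D ihC ihD =>
    intro ρ₁ ρ₂ h
    have h1 : ∀ x ∈ C.FV, ρ₁ x = ρ₂ x := fun x hx => h x (by simp [FOForm.FV, hx])
    have h2 : ∀ x ∈ D.FV, ρ₁ x = ρ₂ x := fun x hx => h x (by simp [FOForm.FV, hx])
    simp only [fsat]; rw [ihC _ _ h1, ihD _ _ h2]
  | or C D ihC ihD =>
    intro ρ₁ ρ₂ h
    have h1 : ∀ x ∈ C.FV, ρ₁ x = ρ₂ x := fun x hx => h x (by simp [FOForm.FV, hx])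
    have h2 : ∀ x ∈ D.FV, ρ₁ x = ρ₂ x := fun x hx => h x (by simp [FOForm.FV, hx])
    simp only [fsat]; rw [ihC _ _ h1, ihD _ _ h2]
  | imp C D ihC ihD =>
    intro ρ₁ ρ₂ h
    have h1 : ∀ x ∈ C.FV, ρ₁ x = ρ₂ x := fun x hx => h x (by simp [FOForm.FV, hx])
    have h2 : ∀ x ∈ D.FV, ρ₁ x = ρ₂ x := fun x hx => h x (by simp [FOForm.FV, hx])
    simp only [fsat]; rw [ihC _ _ h1, ihD _ _ h2]
  | all x C ih =>
    intro ρ₁ ρ₂ h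
    simp only [fsat]
    apply forall_congr'
    intro d
    apply ih
    intro y hy
    by_cases hxy : y = x
    · subst hxy; simp [Function.update]
    · simp only [Function.update, dif_neg hxy]
      exact h y (by simp [FOForm.FV, Finset.mem_erase, hxy, hy])
  | ex x C ih =>
    intro ρ₁ ρ₂ h
    simp only [fsat]
    apply exists_congr
    intro d
    apply ih
    intro y hy
    by_cases hxy : y = x
    · subst hxy; simp [Function.update]
    · simp only [Function.update, dif_neg hxy]
      exact h y (by simp [FOForm.FV, Finset.mem_erase, hxy, hy])

theorem fsat_closed {P : ℕ → Type} {N : FOStruct P} {C : FOForm P} (h : C.FV = ∅)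
    (ρ₁ ρ₂ : ℕ → N.D) : fsat N C ρ₁ ↔ fsat N C ρ₂ :=
  fsat_congr N C ρ₁ ρ₂ (by intro x hx; rw [h] at hx; exact absurd hx (Finset.notMem_empty x))

/-- Universal closure over a list of variables. -/
def closeL (l : List ℕ) (C : LForm) : LForm := l.foldr .all C

theorem FV_closeL (l : List ℕ) (C : LForm) : (closeL l C).FV = C.FV \ l.toFinset := by
  induction l with
  | nil => simp [closeL]
  | cons x l ih =>
    show ((closeL l C).FV).erase x = _
    rw [ih]
    ext y
    simp only [Finset.mem_erase, Finset.mem_sdiff, List.toFinset_cons, Finset.mem_insert,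
      List.mem_toFinset]
    tauto

theorem sat_closeL_elim {N : FOStruct PureLang} :
    ∀ (l : List ℕ) (C : LForm) (ρ : ℕ → N.D), fsat N (closeL l C) ρ →
      ∀ ρ' : ℕ → N.D, (∀ x, x ∉ l → ρ' x = ρ x) → fsat N C ρ' := by
  intro l
  induction l with
  | nil =>
    intro C ρ h ρ' hρ'
    have : ρ' = ρ := funext fun x => hρ' x (by simp)
    rwa [this]
  | cons x l ih =>
    intro C ρ h ρ' hρ'
    have h1 : fsat N (closeL l C) (Function.update ρ x (ρ' x)) := h (ρ' x)
    apply ih C _ h1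
    intro y hy
    by_cases hxy : y = x
    · subst hxy; simp [Function.update]
    · simp only [Function.update, dif_neg hxy]
      exact hρ' y (by simp [hxy, hy])

/-- A one-element structure. -/
def unitStruct : FOStruct PureLang := ⟨Unit, ⟨()⟩, fun _ _ => True⟩

def unitRho : ℕ → unitStruct.D := fun _ => ()

theorem unit_update (ρ : ℕ → unitStruct.D) (x : ℕ) (d : unitStruct.D) :
    Function.update ρ x d = ρ := by
  funext y; rfl

theorem fsat_unit_all (C : FOForm PureLang) (x : ℕ) (ρ : ℕ → unitStruct.D) :
    fsat unitStruct (.all x C) ρ ↔ fsat unitStruct C ρ := by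
  simp only [fsat]
  constructor
  · intro h; have := h (); exact this
  · intro h d; rwa [unit_update]

theorem fsat_unit_ex (C : FOForm PureLang) (x : ℕ) (ρ : ℕ → unitStruct.D) :
    fsat unitStruct (.ex x C) ρ ↔ fsat unitStruct C ρ := by
  simp only [fsat]
  constructor
  · rintro ⟨d, h⟩; rwa [unit_update] at h
  · intro h; exact ⟨(), h⟩

/-- Ground truth value of an atom, read off from a unifier in the one-element model. -/
noncomputable def gAtom (σ₀ : FOSubst PureLang) {n : ℕ} (p : PureLang n)
    (args : Fin n → ℕ) : LForm :=
  if fsat unitStruct (σ₀.app (.pred p args)) unitRho then .top else .bot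

theorem FV_gAtom (σ₀ : FOSubst PureLang) {n : ℕ} (p : PureLang n) (args : Fin n → ℕ) :
    (gAtom σ₀ p args).FV = ∅ := by
  unfold gAtom; split <;> rfl

/-- The key substitution: `P(x̄) ↦ (T ∧ P(x̄)) ∨ (¬T ∧ gAtom)`. -/
noncomputable def mapForm (σ₀ : FOSubst PureLang) (T : LForm) : LForm → LForm
  | .pred p args =>
      .or (.and T (.pred p args)) (.and (T.imp .bot) (gAtom σ₀ p args))
  | .bot => .bot
  | .top => .top
  | .and C D => .and (mapForm σ₀ T C) (mapForm σ₀ T D)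
  | .or C D => .or (mapForm σ₀ T C) (mapForm σ₀ T D)
  | .imp C D => .imp (mapForm σ₀ T C) (mapForm σ₀ T D)
  | .all x C => .all x (mapForm σ₀ T C)
  | .ex x C => .ex x (mapForm σ₀ T C)

/-- In models where `T` holds (everywhere), `mapForm` acts like the identity. -/
theorem mapForm_true {σ₀ : FOSubst PureLang} {T : LForm} {N : FOStruct PureLang}
    (hT : ∀ ρ : ℕ → N.D, fsat N T ρ) :
    ∀ (C : LForm) (ρ : ℕ → N.D), fsat N (mapForm σ₀ T C) ρ ↔ fsat N C ρ := by
  intro C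
  induction C with
  | pred p args =>
    intro ρ
    simp only [mapForm, fsat]
    constructor
    · rintro (⟨_, h⟩ | ⟨h, _⟩)
      · exact h
      · exact absurd (hT ρ) h
    · intro h; exact Or.inl ⟨hT ρ, h⟩
  | bot => intro ρ; rfl
  | top => intro ρ; rfl
  | and C D ihC ihD => intro ρ; simp only [mapForm, fsat, ihC, ihD]
  | or C D ihC ihD => intro ρ; simp only [mapForm, fsat, ihC, ihD]
  | imp C D ihC ihD => intro ρ; simp only [mapForm, fsat, ihC, ihD]
  | all x C ih => intro ρ; simp only [mapForm, fsat, ih]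
  | ex x C ih => intro ρ; simp only [mapForm, fsat, ih]

/-- In models where `T` fails (everywhere), `mapForm C` evaluates like `σ₀ C` in the
one-element model. -/
theorem mapForm_false {σ₀ : FOSubst PureLang} {T : LForm} {N : FOStruct PureLang}
    (hT : ∀ ρ : ℕ → N.D, ¬ fsat N T ρ) :
    ∀ (C : LForm) (ρ : ℕ → N.D),
      fsat N (mapForm σ₀ T C) ρ ↔ fsat unitStruct (σ₀.app C) unitRho := by
  intro C
  induction C with
  | pred p args =>
    intro ρ
    simp only [mapForm, fsat]
    unfold gAtom
    constructor
    · rintro (⟨h, _⟩ | ⟨_, h⟩)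
      · exact absurd h (hT ρ)
      · revert h; split
        · intro _; assumption
        · intro h; exact absurd h id
    · intro h
      refine Or.inr ⟨fun h' => hT ρ h', ?_⟩
      rw [if_pos h]; trivial
  | bot =>
    intro ρ
    rw [σ₀.map_bot]; rfl
  | top =>
    intro ρ
    rw [σ₀.map_top]; rfl
  | and C D ihC ihD =>
    intro ρ; rw [σ₀.map_and]; simp only [mapForm, fsat, ihC, ihD]
  | or C D ihC ihD =>
    intro ρ; rw [σ₀.map_or]; simp only [mapForm, fsat, ihC, ihD]
  | imp C D ihC ihD =>
    intro ρ; rw [σ₀.map_imp]; simp only [mapForm, fsat, ihC, ihD]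
  | all x C ih =>
    intro ρ
    rw [σ₀.map_all, fsat_unit_all]
    simp only [mapForm, fsat]
    constructor
    · intro h
      obtain ⟨d⟩ := N.dne
      exact (ih _).1 (h d)
    · intro h d
      exact (ih _).2 h
  | ex x C ih =>
    intro ρ
    rw [σ₀.map_ex, fsat_unit_ex]
    simp only [mapForm, fsat]
    constructor
    · rintro ⟨d, h⟩
      exact (ih _).1 h
    · intro h
      obtain ⟨d⟩ := N.dne
      exact ⟨d, (ih _).2 h⟩

/-- Derivability of the universal closure, from the generalization rule. -/
theorem der_closeL (R : ConsRel PureLang)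
    (hgen : ∀ (C : LForm) (x : ℕ), R.der C (.all x C)) (A : LForm) :
    ∀ l : List ℕ, R.der A (closeL l A) := by
  intro l
  induction l with
  | nil => exact R.refl A
  | cons x l ih => exact R.trans ih (hgen (closeL l A) x)

end Aux18

/-- Let `⊢` be a consequence relation for `CQC` (having the same theorems
as `CQC`) satisfying `C(x̄) ⊢ ∀x̄ C(x̄)` for all formulas `C`. Then for every unifiable
formula `A` and every formula `B`, if `A / B` is admissible in `CQC` then `A ⊢ B`:
`CQC` is almost structurally complete. -/
theorem cqc_almost_structurally_complete (R : ConsRel PureLang)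
    (hthm : ∀ A : LForm, R.der .top A ↔ CQCValid A)
    (hgen : ∀ (C : LForm) (x : ℕ), R.der C (.all x C)) :
    ∀ A B : LForm, UnifiableCQC A → AdmCQC A B → R.der A B := by
  intro A B hA hadm
  classical
  obtain ⟨σ₀, hσ₀⟩ := hA
  set T : LForm := closeL A.FV.toList A with hTdef
  have hFVT : T.FV = ∅ := by
    rw [hTdef, FV_closeL]
    simp
  -- the key substitution
  let σ : FOSubst PureLang :=
    { app := mapForm σ₀ T
      map_bot := rfl
      map_top := rfl
      map_and := fun _ _ => rfl
      map_or := fun _ _ => rfl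
      map_imp := fun _ _ => rfl
      map_all := fun _ _ => rfl
      map_ex := fun _ _ => rfl
      fv_pred := by
        intro n p args
        show (FOForm.or (.and T (.pred p args)) (.and (T.imp .bot) (gAtom σ₀ p args))).FV ⊆ _
        simp only [FOForm.FV, hFVT, FV_gAtom]
        intro x hx
        simp only [Finset.mem_union, Finset.notMem_empty, or_false, false_or] at hx
        exact hx }
  -- σ(A) is valid
  have hσA : CQCValid (σ.app A) := by
    intro N ρ
    by_cases hT : ∀ ρ' : ℕ → N.D, fsat N T ρ'
    · rw [show σ.app A = mapForm σ₀ T A from rfl, mapForm_true hT]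
      exact sat_closeL_elim A.FV.toList A ρ (hT ρ) ρ (fun _ _ => rfl)
    · push_neg at hT
      obtain ⟨ρ₀, hρ₀⟩ := hT
      have hT' : ∀ ρ' : ℕ → N.D, ¬ fsat N T ρ' := fun ρ' h =>
        hρ₀ ((fsat_closed hFVT ρ' ρ₀).1 h)
      rw [show σ.app A = mapForm σ₀ T A from rfl, mapForm_false hT']
      exact hσ₀ unitStruct unitRho
  -- admissibility gives validity of σ(B)
  have hσB : CQCValid (σ.app B) := hadm σ hσA
  -- hence ⊨ T → B
  have hTB : CQCValid (T.imp B) := by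
    intro N ρ
    show fsat N T ρ → fsat N B ρ
    intro hTρ
    have hT : ∀ ρ' : ℕ → N.D, fsat N T ρ' := fun ρ' =>
      (fsat_closed hFVT ρ ρ').1 hTρ
    have := hσB N ρ
    rwa [show σ.app B = mapForm σ₀ T B from rfl, mapForm_true hT] at this
  -- put it together via the consequence relation
  have h1 : R.der A (T.imp B) := R.thm_mono ((hthm (T.imp B)).2 hTB)
  have h2 : R.der A T := der_closeL R hgen A A.FV.toList
  exact R.mp h1 h2
end
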